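/- arXiv:1404.2648 — 3 statements merged into one kernel-verified Lean document; each statement's English description precedes it below -/
import Mathlib

section
/- For every ε > 0 there exist a positive integer g and a set S of positive integers such that for every positive integer n the number of representations n = s₁ + s₂ with s₁, s₂ ∈ S and s₁ ≤ s₂ is at most g, and such that card(S ∩ {1, …, n}) > n^{1/2 − ε} for all sufficiently large n. -/
open Filter

section ERproof
open Finset

namespace ER

/-- reps of `n` inside `B` counted by the smaller element. -/
def Wcnt (B : Finset ℕ) (n : ℕ) : ℕ := (B.filter (fun x => x ≤ n - x ∧ n - x ∈ B)).card
/-- cross reps of `n` with smaller element in `P`, larger in `B`. -/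
def Xcnt (P B : Finset ℕ) (n : ℕ) : ℕ := (P.filter (fun a => a ≤ n ∧ n - a ∈ B)).card

/-- number of `m`-subsets of `I` containing a fixed set with at least `t` elements -/
lemma card_superset_le (I : Finset ℕ) (m t : ℕ) (F : Finset ℕ) (htF : t ≤ F.card) (htm : t ≤ m) :
    ((I.powersetCard m).filter (fun B => F ⊆ B)).card ≤ (I.card - t).choose (m - t) := by
  obtain ⟨F', hF'sub, hF'card⟩ := Finset.exists_subset_card_eq htF
  by_cases hFI : F' ⊆ I
  · calc ((I.powersetCard m).filter (fun B => F ⊆ B)).card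
        ≤ ((I \ F').powersetCard (m - t)).card := by
          apply Finset.card_le_card_of_injOn (fun B => B \ F')
          · intro B hB
            simp only [Finset.mem_coe, mem_filter, Finset.mem_powersetCard] at hB ⊢
            obtain ⟨⟨hBI, hBcard⟩, hFB⟩ := hB
            have hF'B : F' ⊆ B := hF'sub.trans hFB
            constructor
            · intro x hx
              simp only [Finset.mem_sdiff] at hx ⊢
              exact ⟨hBI hx.1, hx.2⟩
            · rw [Finset.card_sdiff_of_subset hF'B, hBcard, hF'card]
          · intro B₁ h₁ B₂ h₂ he
            simp only [coe_filter, Set.mem_setOf_eq, Finset.mem_powersetCard] at h₁ h₂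
            have hF'B₁ : F' ⊆ B₁ := hF'sub.trans h₁.2
            have hF'B₂ : F' ⊆ B₂ := hF'sub.trans h₂.2
            ext x
            constructor
            · intro hx
              by_cases hxF : x ∈ F'
              · exact hF'B₂ hxF
              · have : x ∈ B₁ \ F' := Finset.mem_sdiff.2 ⟨hx, hxF⟩
                simp only [] at he; rw [show B₁ \ F' = B₂ \ F' from he] at this
                exact (Finset.mem_sdiff.1 this).1
            · intro hx
              by_cases hxF : x ∈ F'
              · exact hF'B₁ hxF
              · have : x ∈ B₂ \ F' := Finset.mem_sdiff.2 ⟨hx, hxF⟩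
                simp only [] at he; rw [← show B₁ \ F' = B₂ \ F' from he] at this
                exact (Finset.mem_sdiff.1 this).1
      _ = (I.card - t).choose (m - t) := by
          rw [Finset.card_powersetCard, Finset.card_sdiff_of_subset hFI, hF'card]
  · rw [Finset.filter_eq_empty_iff.2 ?_]
    · simp
    · intro B hB hFB
      exact hFI ((hF'sub.trans hFB).trans (Finset.mem_powersetCard.1 hB).1)

lemma choose_ratio (N m : ℕ) (hmN : m ≤ N) : ∀ t, t ≤ m →
    (N - t) ^ t * (N - t).choose (m - t) ≤ m ^ t * N.choose m := by
  intro t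
  induction t with
  | zero => simp
  | succ t ih =>
    intro ht
    have ht' : t ≤ m := Nat.le_of_succ_le ht
    have htm : t < m := ht
    have htN : t < N := lt_of_lt_of_le htm hmN
    -- (N - t) * C(N-t-1, m-t-1) = (m - t) * C(N-t, m-t)
    have key : (N - t) * (N - (t+1)).choose (m - (t+1)) = (N - t).choose (m - t) * (m - t) := by
      have h1 : N - t = (N - (t+1)) + 1 := by omega
      have h2 : m - t = (m - (t+1)) + 1 := by omega
      rw [h1, h2]
      exact Nat.add_one_mul_choose_eq (N - (t+1)) (m - (t+1))
    calc (N - (t+1)) ^ (t+1) * (N - (t+1)).choose (m - (t+1))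
        ≤ (N - t) ^ t * ((N - t) * (N - (t+1)).choose (m - (t+1))) := by
          rw [pow_succ]
          have h3 : (N - (t+1)) ^ t ≤ (N - t) ^ t := Nat.pow_le_pow_left (by omega) t
          calc (N - (t+1)) ^ t * (N - (t+1)) * (N - (t+1)).choose (m - (t+1))
              = (N - (t+1)) ^ t * ((N - (t+1)) * (N - (t+1)).choose (m - (t+1))) := by ring
            _ ≤ (N - t) ^ t * ((N - t) * (N - (t+1)).choose (m - (t+1))) := by
                apply Nat.mul_le_mul h3
                exact Nat.mul_le_mul_right _ (by omega)
      _ = (N - t) ^ t * ((N - t).choose (m - t) * (m - t)) := by rw [key]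
      _ ≤ (N - t) ^ t * ((N - t).choose (m - t) * m) := by
          apply Nat.mul_le_mul_left
          exact Nat.mul_le_mul_left _ (by omega)
      _ = ((N - t) ^ t * (N - t).choose (m - t)) * m := by ring
      _ ≤ (m ^ t * N.choose m) * m := Nat.mul_le_mul_right _ (ih ht')
      _ = m ^ (t+1) * N.choose m := by ring


lemma size_F (n u : ℕ) (X : Finset ℕ) (hX : ∀ x ∈ X, x ≤ n - x) (hcard : X.card = u + 1) :
    2*u+1 ≤ (X ∪ X.image (fun x => n - x)).card := by
  have himg : (X.image (fun x => n - x)).card = u + 1 := by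
    rw [Finset.card_image_of_injOn, hcard]
    intro x hx y hy he
    have he' : n - x = n - y := he
    have h1 := hX x hx
    have h2 := hX y hy
    omega
  have hinter : (X ∩ X.image (fun x => n - x)).card ≤ 1 := by
    apply Finset.card_le_one.2
    intro a ha b hb
    simp only [Finset.mem_inter, Finset.mem_image] at ha hb
    obtain ⟨haX, x, hxX, hxa⟩ := ha
    obtain ⟨hbX, y, hyX, hyb⟩ := hb
    have h1 := hX a haX
    have h2 := hX x hxX
    have h3 := hX b hbX
    have h4 := hX y hyX
    omega
  have := Finset.card_union_add_card_inter X (X.image (fun x => n - x))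
  omega

lemma badW_subset (I : Finset ℕ) (m u n : ℕ) :
    ((I.powersetCard m).filter (fun B => u+1 ≤ Wcnt B n)) ⊆
      ((I.filter (fun x => x ≤ n - x)).powersetCard (u+1)).biUnion
        (fun X => (I.powersetCard m).filter (fun B => X ∪ X.image (fun x => n - x) ⊆ B)) := by
  intro B hB
  simp only [Finset.mem_filter] at hB
  obtain ⟨hBΩ, hW⟩ := hB
  have hBI : B ⊆ I := (Finset.mem_powersetCard.1 hBΩ).1
  obtain ⟨X, hXsub, hXcard⟩ := Finset.exists_subset_card_eq hW
  rw [Finset.mem_biUnion]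
  refine ⟨X, ?_, ?_⟩
  · rw [Finset.mem_powersetCard]
    refine ⟨?_, hXcard⟩
    intro x hx
    have := hXsub hx
    simp only [Finset.mem_filter] at this ⊢
    exact ⟨hBI this.1, this.2.1⟩
  · rw [Finset.mem_filter]
    refine ⟨hBΩ, ?_⟩
    apply Finset.union_subset
    · intro x hx
      exact (Finset.mem_filter.1 (hXsub hx)).1
    · intro z hz
      obtain ⟨x, hx, rfl⟩ := Finset.mem_image.1 hz
      exact (Finset.mem_filter.1 (hXsub hx)).2.2

lemma badX_subset (I P : Finset ℕ) (m v n : ℕ) :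
    ((I.powersetCard m).filter (fun B => v+1 ≤ Xcnt P B n)) ⊆
      ((P.filter (fun a => a ≤ n)).powersetCard (v+1)).biUnion
        (fun Y => (I.powersetCard m).filter (fun B => Y.image (fun a => n - a) ⊆ B)) := by
  intro B hB
  simp only [Finset.mem_filter] at hB
  obtain ⟨hBΩ, hX⟩ := hB
  obtain ⟨Y, hYsub, hYcard⟩ := Finset.exists_subset_card_eq hX
  rw [Finset.mem_biUnion]
  refine ⟨Y, ?_, ?_⟩
  · rw [Finset.mem_powersetCard]
    refine ⟨?_, hYcard⟩
    intro a ha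
    have := hYsub ha
    simp only [Finset.mem_filter] at this ⊢
    exact ⟨this.1, this.2.1⟩
  · rw [Finset.mem_filter]
    refine ⟨hBΩ, ?_⟩
    intro z hz
    obtain ⟨a, ha, rfl⟩ := Finset.mem_image.1 hz
    exact (Finset.mem_filter.1 (hYsub ha)).2.2

lemma card_imageY (n v : ℕ) (Y : Finset ℕ) (hY : ∀ a ∈ Y, a ≤ n) (hcard : Y.card = v + 1) :
    (Y.image (fun a => n - a)).card = v + 1 := by
  rw [Finset.card_image_of_injOn, hcard]
  intro x hx y hy he
  have he' : n - x = n - y := he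
  have h1 := hY x hx
  have h2 := hY y hy
  omega


lemma exists_good (N m u v : ℕ) (P : Finset ℕ)
    (hP : P ⊆ Finset.range (2*N)) (hmN : m ≤ N)
    (ht1m : 2*u+1 ≤ m) (ht2m : v+1 ≤ m)
    (H1 : 8 * N^(u+2) * m^(2*u+1) < (N - (2*u+1))^(2*u+1))
    (H2 : 8 * N * (P.card * m)^(v+1) < (N - (v+1))^(v+1)) :
    ∃ B : Finset ℕ, B ⊆ Finset.Ico N (2*N) ∧ B.card = m ∧
      (∀ n, Wcnt B n ≤ u) ∧ (∀ n, Xcnt P B n ≤ v) := by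
  set I : Finset ℕ := Finset.Ico N (2*N) with hI
  have hIcard : I.card = N := by rw [hI, Nat.card_Ico]; omega
  set Ω : Finset (Finset ℕ) := I.powersetCard m with hΩ
  have hΩcard : Ω.card = N.choose m := by rw [hΩ, Finset.card_powersetCard, hIcard]
  have hΩpos : 0 < Ω.card := by rw [hΩcard]; exact Nat.choose_pos hmN
  have hCpos : 0 < N.choose m := Nat.choose_pos hmN
  set t₁ := 2*u+1 with ht₁
  set t₂ := v+1 with ht₂
  set C1 := (N - t₁).choose (m - t₁) with hC1
  set C2 := (N - t₂).choose (m - t₂) with hC2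
  -- per-n bounds
  have cardW : ∀ n, ((Ω.filter (fun B => u+1 ≤ Wcnt B n)).card) ≤ N^(u+1) * C1 := by
    intro n
    calc (Ω.filter (fun B => u+1 ≤ Wcnt B n)).card
        ≤ (((I.filter (fun x => x ≤ n - x)).powersetCard (u+1)).biUnion
            (fun X => Ω.filter (fun B => X ∪ X.image (fun x => n - x) ⊆ B))).card :=
          Finset.card_le_card (badW_subset I m u n)
      _ ≤ ∑ X ∈ (I.filter (fun x => x ≤ n - x)).powersetCard (u+1),
            (Ω.filter (fun B => X ∪ X.image (fun x => n - x) ⊆ B)).card :=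
          Finset.card_biUnion_le
      _ ≤ ∑ _X ∈ (I.filter (fun x => x ≤ n - x)).powersetCard (u+1), C1 := by
          apply Finset.sum_le_sum
          intro X hX
          rw [Finset.mem_powersetCard] at hX
          have hprop : ∀ x ∈ X, x ≤ n - x := by
            intro x hx
            exact (Finset.mem_filter.1 (hX.1 hx)).2
          have hF := size_F n u X hprop hX.2
          have := card_superset_le I m t₁ (X ∪ X.image (fun x => n - x)) hF ht1m
          rwa [hIcard] at this
      _ = ((I.filter (fun x => x ≤ n - x)).powersetCard (u+1)).card * C1 := by
          rw [Finset.sum_const, smul_eq_mul]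
      _ ≤ N^(u+1) * C1 := by
          apply Nat.mul_le_mul_right
          rw [Finset.card_powersetCard]
          calc ((I.filter (fun x => x ≤ n - x)).card).choose (u+1)
              ≤ N.choose (u+1) := Nat.choose_le_choose _ (le_trans (Finset.card_filter_le _ _) hIcard.le)
            _ ≤ N^(u+1) := Nat.choose_le_pow N (u+1)
  have cardX : ∀ n, ((Ω.filter (fun B => v+1 ≤ Xcnt P B n)).card) ≤ P.card^(v+1) * C2 := by
    intro n
    calc (Ω.filter (fun B => v+1 ≤ Xcnt P B n)).card
        ≤ (((P.filter (fun a => a ≤ n)).powersetCard (v+1)).biUnion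
            (fun Y => Ω.filter (fun B => Y.image (fun a => n - a) ⊆ B))).card :=
          Finset.card_le_card (badX_subset I P m v n)
      _ ≤ ∑ Y ∈ (P.filter (fun a => a ≤ n)).powersetCard (v+1),
            (Ω.filter (fun B => Y.image (fun a => n - a) ⊆ B)).card :=
          Finset.card_biUnion_le
      _ ≤ ∑ _Y ∈ (P.filter (fun a => a ≤ n)).powersetCard (v+1), C2 := by
          apply Finset.sum_le_sum
          intro Y hY
          rw [Finset.mem_powersetCard] at hY
          have hprop : ∀ a ∈ Y, a ≤ n := by
            intro a ha
            exact (Finset.mem_filter.1 (hY.1 ha)).2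
          have hF : t₂ ≤ (Y.image (fun a => n - a)).card := by
            rw [card_imageY n v Y hprop hY.2]
          have := card_superset_le I m t₂ (Y.image (fun a => n - a)) hF ht2m
          rwa [hIcard] at this
      _ = ((P.filter (fun a => a ≤ n)).powersetCard (v+1)).card * C2 := by
          rw [Finset.sum_const, smul_eq_mul]
      _ ≤ P.card^(v+1) * C2 := by
          apply Nat.mul_le_mul_right
          rw [Finset.card_powersetCard]
          calc ((P.filter (fun a => a ≤ n)).card).choose (v+1)
              ≤ P.card.choose (v+1) := Nat.choose_le_choose _ (Finset.card_filter_le _ _)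
            _ ≤ P.card^(v+1) := Nat.choose_le_pow _ (v+1)
  -- the bad set
  set Bad : Finset (Finset ℕ) := (Finset.range (4*N)).biUnion
      (fun n => Ω.filter (fun B => u+1 ≤ Wcnt B n) ∪ Ω.filter (fun B => v+1 ≤ Xcnt P B n)) with hBad
  have hBadsubΩ : Bad ⊆ Ω := by
    intro B hB
    rw [hBad, Finset.mem_biUnion] at hB
    obtain ⟨n, _, hB⟩ := hB
    rcases Finset.mem_union.1 hB with h | h
    · exact Finset.mem_of_mem_filter _ h
    · exact Finset.mem_of_mem_filter _ h
  have hBadcard : Bad.card ≤ 4*N * (N^(u+1) * C1) + 4*N * (P.card^(v+1) * C2) := by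
    calc Bad.card
        ≤ ∑ n ∈ Finset.range (4*N),
            (Ω.filter (fun B => u+1 ≤ Wcnt B n) ∪ Ω.filter (fun B => v+1 ≤ Xcnt P B n)).card :=
          Finset.card_biUnion_le
      _ ≤ ∑ _n ∈ Finset.range (4*N), (N^(u+1) * C1 + P.card^(v+1) * C2) := by
          apply Finset.sum_le_sum
          intro n _
          calc (Ω.filter (fun B => u+1 ≤ Wcnt B n) ∪ Ω.filter (fun B => v+1 ≤ Xcnt P B n)).card
              ≤ (Ω.filter (fun B => u+1 ≤ Wcnt B n)).card
                  + (Ω.filter (fun B => v+1 ≤ Xcnt P B n)).card := Finset.card_union_le _ _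
            _ ≤ N^(u+1) * C1 + P.card^(v+1) * C2 := Nat.add_le_add (cardW n) (cardX n)
      _ = 4*N * (N^(u+1) * C1) + 4*N * (P.card^(v+1) * C2) := by
          rw [Finset.sum_const, Finset.card_range, smul_eq_mul]; ring
  -- numeric estimates
  have hK1pos : 0 < (N - t₁)^t₁ := Nat.zero_lt_of_lt H1
  have hK2pos : 0 < (N - t₂)^t₂ := Nat.zero_lt_of_lt H2
  have hA1 : 8 * N * (N^(u+1) * C1) < N.choose m := by
    have step : (N - t₁)^t₁ * (8 * N * (N^(u+1) * C1)) < (N - t₁)^t₁ * N.choose m := by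
      calc (N - t₁)^t₁ * (8 * N * (N^(u+1) * C1))
          = 8 * N^(u+2) * ((N - t₁)^t₁ * C1) := by rw [pow_succ]; ring
        _ ≤ 8 * N^(u+2) * (m^t₁ * N.choose m) :=
            Nat.mul_le_mul_left _ (choose_ratio N m hmN t₁ ht1m)
        _ = (8 * N^(u+2) * m^t₁) * N.choose m := by ring
        _ < (N - t₁)^t₁ * N.choose m := (Nat.mul_lt_mul_right hCpos).mpr H1
    exact Nat.lt_of_mul_lt_mul_left step
  have hA2 : 8 * N * (P.card^(v+1) * C2) < N.choose m := by
    have step : (N - t₂)^t₂ * (8 * N * (P.card^(v+1) * C2)) < (N - t₂)^t₂ * N.choose m := by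
      calc (N - t₂)^t₂ * (8 * N * (P.card^(v+1) * C2))
          = 8 * N * P.card^(v+1) * ((N - t₂)^t₂ * C2) := by ring
        _ ≤ 8 * N * P.card^(v+1) * (m^t₂ * N.choose m) :=
            Nat.mul_le_mul_left _ (choose_ratio N m hmN t₂ ht2m)
        _ = (8 * N * (P.card * m)^(v+1)) * N.choose m := by
            rw [mul_pow]; ring
        _ < (N - t₂)^t₂ * N.choose m := (Nat.mul_lt_mul_right hCpos).mpr H2
    exact Nat.lt_of_mul_lt_mul_left step
  have hBadlt : Bad.card < Ω.card := by
    rw [hΩcard]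
    have e1 : 8*N*(N^(u+1)*C1) = 2*(4*N*(N^(u+1)*C1)) := by ring
    have e2 : 8*N*(P.card^(v+1)*C2) = 2*(4*N*(P.card^(v+1)*C2)) := by ring
    omega
  -- pick a good B
  have hgood : (Ω \ Bad).Nonempty := by
    rw [← Finset.card_pos, Finset.card_sdiff_of_subset hBadsubΩ]
    omega
  obtain ⟨B, hB⟩ := hgood
  rw [Finset.mem_sdiff] at hB
  obtain ⟨hBΩ, hBnotbad⟩ := hB
  have hkey : ∀ n, n ∈ Finset.range (4*N) → Wcnt B n ≤ u ∧ Xcnt P B n ≤ v := by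
    intro n hn
    by_contra hcon
    apply hBnotbad
    rw [hBad, Finset.mem_biUnion]
    refine ⟨n, hn, ?_⟩
    rw [Finset.mem_union]
    rcases Nat.lt_or_ge (Wcnt B n) (u+1) with h1 | h1
    · rcases Nat.lt_or_ge (Xcnt P B n) (v+1) with h2 | h2
      · exact absurd ⟨by omega, by omega⟩ hcon
      · exact Or.inr (Finset.mem_filter.2 ⟨hBΩ, h2⟩)
    · exact Or.inl (Finset.mem_filter.2 ⟨hBΩ, h1⟩)
  rw [hΩ, Finset.mem_powersetCard] at hBΩ
  refine ⟨B, hBΩ.1, hBΩ.2, ?_, ?_⟩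
  · intro n
    by_cases hn : n < 4*N
    · exact (hkey n (Finset.mem_range.2 hn)).1
    · have : Wcnt B n = 0 := by
        rw [Wcnt, Finset.card_eq_zero, Finset.filter_eq_empty_iff]
        intro x hx
        have hxI := hBΩ.1 hx
        rw [Finset.mem_Ico] at hxI
        intro hcon
        obtain ⟨h1, h2⟩ := hcon
        have hyI := hBΩ.1 h2
        rw [Finset.mem_Ico] at hyI
        omega
      omega
  · intro n
    by_cases hn : n < 4*N
    · exact (hkey n (Finset.mem_range.2 hn)).2
    · have : Xcnt P B n = 0 := by
        rw [Xcnt, Finset.card_eq_zero, Finset.filter_eq_empty_iff]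
        intro a ha
        have haP := hP ha
        rw [Finset.mem_range] at haP
        intro hcon
        obtain ⟨h1, h2⟩ := hcon
        have hyI := hBΩ.1 h2
        rw [Finset.mem_Ico] at hyI
        omega
      omega


section numeric0
variable (L A0 : ℕ)

def aseq : ℕ → ℕ
  | 0 => A0
  | k+1 => aseq k + aseq k / L

def Nk (k : ℕ) : ℕ := 2 ^ aseq L A0 k
def ck (k : ℕ) : ℕ := aseq L A0 k * (L-1) / (2*L)
def mk (k : ℕ) : ℕ := 2 ^ ck L A0 k


variable (hL : 3 ≤ L) (hA : 100*L*L ≤ A0)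
include hL hA

lemma aseq_ge : ∀ k, A0 ≤ aseq L A0 k := by
  intro k
  induction k with
  | zero => exact le_rfl
  | succ k ih => calc A0 ≤ aseq L A0 k := ih
                  _ ≤ aseq L A0 (k+1) := Nat.le_add_right _ _

lemma aseq_big (k : ℕ) : 100*L*L ≤ aseq L A0 k := le_trans hA (aseq_ge L A0 hL hA k)

lemma aseq_div_ge (k : ℕ) : 100*L ≤ aseq L A0 k / L := by
  have h1 : 100*L*L ≤ aseq L A0 k := aseq_big L A0 hL hA k
  have hLpos : 0 < L := by omega
  calc 100*L = 100*L*L/L := by rw [Nat.mul_div_cancel _ hLpos]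
    _ ≤ aseq L A0 k / L := Nat.div_le_div_right h1

lemma aseq_step (k : ℕ) : aseq L A0 k + 100*L ≤ aseq L A0 (k+1) := by
  have := aseq_div_ge L A0 hL hA k
  show aseq L A0 k + 100*L ≤ aseq L A0 k + aseq L A0 k / L
  omega

lemma aseq_mono : StrictMono (aseq L A0) := by
  apply strictMono_nat_of_lt_succ
  intro k
  have := aseq_step L A0 hL hA k
  have : 0 < L := by omega
  omega

lemma aseq_succ_le (k : ℕ) : L * aseq L A0 (k+1) ≤ (L+1) * aseq L A0 k := by
  show L * (aseq L A0 k + aseq L A0 k / L) ≤ (L+1) * aseq L A0 k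
  have h := Nat.div_mul_le_self (aseq L A0 k) L
  have h2 : L * (aseq L A0 k / L) ≤ aseq L A0 k := by
    calc L * (aseq L A0 k / L) = (aseq L A0 k / L) * L := by ring
      _ ≤ aseq L A0 k := h
  nlinarith
lemma ck_le_half (k : ℕ) : 2 * (ck L A0 k * L) ≤ aseq L A0 k * (L-1) := by
  have := Nat.div_mul_le_self (aseq L A0 k * (L-1)) (2*L)
  calc 2 * (ck L A0 k * L) = ck L A0 k * (2*L) := by ring
    _ ≤ aseq L A0 k * (L-1) := Nat.div_mul_le_self _ _

lemma ck_lb (k : ℕ) : aseq L A0 k * (L-1) < ck L A0 k * (2*L) + 2*L := by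
  have h : 0 < 2*L := by omega
  have := Nat.lt_mul_div_succ (aseq L A0 k * (L-1)) h
  calc aseq L A0 k * (L-1) < 2*L * (aseq L A0 k * (L-1) / (2*L) + 1) := this
    _ = ck L A0 k * (2*L) + 2*L := by rw [ck]; ring

lemma ck_mono (k : ℕ) : ck L A0 k + 1 ≤ ck L A0 (k+1) := by
  have hstep := aseq_step L A0 hL hA k
  have key : aseq L A0 k * (L-1) + 2 * (2*L) ≤ aseq L A0 (k+1) * (L-1) := by
    have h1 : (aseq L A0 k + 100*L) * (L-1) ≤ aseq L A0 (k+1) * (L-1) :=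
      Nat.mul_le_mul_right _ hstep
    have h4 : 2*(2*L) ≤ 100*L*(L-1) := by
      have h2 : 2 ≤ L - 1 := by omega
      calc 2*(2*L) = (2*L)*2 := by ring
        _ ≤ (100*L)*(L-1) := Nat.mul_le_mul (by omega) h2
    nlinarith
  have h2L : 0 < 2*L := by omega
  have h5 : (aseq L A0 k * (L-1) + 2*(2*L)) / (2*L) = ck L A0 k + 2 := by
    rw [Nat.add_mul_div_right _ _ h2L]; rfl
  have h6 : ck L A0 k + 2 ≤ ck L A0 (k+1) := by
    have h7 := Nat.div_le_div_right (c := 2*L) key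
    rw [h5] at h7
    exact h7
  omega

lemma ck_ge (k : ℕ) : 100*L ≤ ck L A0 k := by
  have h1 : 100*L*L ≤ aseq L A0 k := aseq_big L A0 hL hA k
  have hL1 : 2 ≤ L - 1 := by omega
  have h2 : 100*L * (2*L) ≤ aseq L A0 k * (L-1) := by
    calc 100*L * (2*L) = (100*L*L)*2 := by ring
      _ ≤ aseq L A0 k * (L-1) := Nat.mul_le_mul h1 hL1
  have h2L : 0 < 2*L := by omega
  calc 100*L = 100*L * (2*L) / (2*L) := by rw [Nat.mul_div_cancel _ h2L]
    _ ≤ aseq L A0 k * (L-1) / (2*L) := Nat.div_le_div_right h2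
    _ = ck L A0 k := rfl

lemma ck_le_aseq (k : ℕ) : ck L A0 k ≤ aseq L A0 k := by
  have : aseq L A0 k * (L-1) ≤ aseq L A0 k * (2*L) := by
    apply Nat.mul_le_mul_left; omega
  have h2L : 0 < 2*L := by omega
  calc ck L A0 k ≤ aseq L A0 k * (2*L) / (2*L) := Nat.div_le_div_right this
    _ = aseq L A0 k := Nat.mul_div_cancel _ h2L

end numeric0

-- exponent inequality 1
lemma expo1 (L a c : ℕ) (hL : 3 ≤ L) (ha : 100*L*L ≤ a) (hc : 2*(c*L) ≤ a*(L-1)) :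
    3 + a*(2*L+2) + c*(4*L+1) < (a-1)*(4*L+1) := by
  obtain ⟨l, rfl⟩ : ∃ l, L = l+3 := ⟨L-3, by omega⟩
  have ha1 : 1 ≤ a := le_trans (by nlinarith) ha
  obtain ⟨a', rfl⟩ : ∃ a', a = a'+1 := ⟨a-1, by omega⟩
  have h1 : (l+3) - 1 = l+2 := by omega
  have h2 : (a'+1) - 1 = a' := by omega
  rw [h1] at hc
  rw [h2]
  -- multiply the goal by 2*L
  have key : (2*(l+3)) * (3 + (a'+1)*(2*(l+3)+2) + c*(4*(l+3)+1)) < (2*(l+3)) * (a'*(4*(l+3)+1)) := by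
    have e1 : (2*(l+3)) * (c*(4*(l+3)+1)) = (2*(c*(l+3))) * (4*(l+3)+1) := by ring
    have e2 : (2*(c*(l+3))) * (4*(l+3)+1) ≤ ((a'+1)*(l+2)) * (4*(l+3)+1) :=
      Nat.mul_le_mul_right _ hc
    nlinarith
  exact Nat.lt_of_mul_lt_mul_left key

-- exponent inequality 2
lemma expo2 (L a c : ℕ) (hL : 3 ≤ L) (ha : 100*L*L ≤ a) (hc : 2*(c*L) ≤ a*(L-1)) :
    3 + a + (2*c)*(3*L) < (a-1)*(3*L) := by
  obtain ⟨l, rfl⟩ : ∃ l, L = l+3 := ⟨L-3, by omega⟩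
  have ha1 : 1 ≤ a := le_trans (by nlinarith) ha
  obtain ⟨a', rfl⟩ : ∃ a', a = a'+1 := ⟨a-1, by omega⟩
  have h1 : (l+3) - 1 = l+2 := by omega
  have h2 : (a'+1) - 1 = a' := by omega
  rw [h1] at hc
  rw [h2]
  have e2 : (2*c)*(3*(l+3)) = 3*(2*(c*(l+3))) := by ring
  have e3 : 3*(2*(c*(l+3))) ≤ 3*((a'+1)*(l+2)) := Nat.mul_le_mul_left _ hc
  nlinarith

lemma two_pow_pred (a t : ℕ) (ha : 1 ≤ a) (ht : t ≤ 2^(a-1)) : 2^(a-1) ≤ 2^a - t := by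
  have h : 2^a = 2^(a-1) * 2 := by
    rw [← pow_succ]
    congr 1
    omega
  omega

lemma self_le_two_pow_pred (a : ℕ) (ha : 1 ≤ a) : a ≤ 2^(a-1) := by
  have := Nat.lt_two_pow_self (n := a-1)
  omega


section cond
variable (L A0 : ℕ) (hL : 3 ≤ L) (hA : 100*L*L ≤ A0)
include hL hA

lemma a_pos (k : ℕ) : 1 ≤ aseq L A0 k := by
  have := aseq_big L A0 hL hA k
  nlinarith

lemma condH1 (k : ℕ) :
    8 * (Nk L A0 k)^(2*L+2) * (mk L A0 k)^(2*(2*L)+1) <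
      (Nk L A0 k - (2*(2*L)+1))^(2*(2*L)+1) := by
  set a := aseq L A0 k with ha
  set c := ck L A0 k with hc
  have hbig : 100*L*L ≤ a := aseq_big L A0 hL hA k
  have hapos : 1 ≤ a := a_pos L A0 hL hA k
  have hchalf : 2*(c*L) ≤ a*(L-1) := ck_le_half L A0 hL hA k
  have hE := expo1 L a c hL hbig hchalf
  have ht : 2*(2*L)+1 ≤ 2^(a-1) := by
    have h1 : 2*(2*L)+1 ≤ a := by nlinarith
    exact le_trans h1 (self_le_two_pow_pred a hapos)
  have lhs_eq : 8 * (Nk L A0 k)^(2*L+2) * (mk L A0 k)^(2*(2*L)+1)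
      = 2^(3 + a*(2*L+2) + c*(2*(2*L)+1)) := by
    rw [Nk, mk, ← ha, ← hc, ← pow_mul, ← pow_mul]
    rw [show (8 : ℕ) = 2^3 from rfl, ← pow_add, ← pow_add]
  rw [lhs_eq]
  have e4 : 2*(2*L)+1 = 4*L+1 := by ring
  calc 2^(3 + a*(2*L+2) + c*(2*(2*L)+1))
      < 2^((a-1)*(2*(2*L)+1)) := by
        apply Nat.pow_lt_pow_right (by norm_num)
        rw [e4]
        rw [e4] at *
        exact hE
    _ = (2^(a-1))^(2*(2*L)+1) := by rw [← pow_mul]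
    _ ≤ (Nk L A0 k - (2*(2*L)+1))^(2*(2*L)+1) := by
        apply Nat.pow_le_pow_left
        exact two_pow_pred a _ hapos ht

lemma condH2 (k : ℕ) (Pc : ℕ) (hPc : Pc ≤ mk L A0 k) :
    8 * (Nk L A0 k) * (Pc * mk L A0 k)^(3*L-1+1) <
      (Nk L A0 k - (3*L-1+1))^(3*L-1+1) := by
  set a := aseq L A0 k with ha
  set c := ck L A0 k with hc
  have hbig : 100*L*L ≤ a := aseq_big L A0 hL hA k
  have hapos : 1 ≤ a := a_pos L A0 hL hA k
  have hchalf : 2*(c*L) ≤ a*(L-1) := ck_le_half L A0 hL hA k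
  have hE := expo2 L a c hL hbig hchalf
  have h3L : 3*L-1+1 = 3*L := by omega
  rw [h3L]
  have ht : 3*L ≤ 2^(a-1) := by
    have h1 : 3*L ≤ a := by nlinarith
    exact le_trans h1 (self_le_two_pow_pred a hapos)
  have step1 : 8 * (Nk L A0 k) * (Pc * mk L A0 k)^(3*L)
      ≤ 8 * (Nk L A0 k) * (mk L A0 k * mk L A0 k)^(3*L) := by
    apply Nat.mul_le_mul_left
    apply Nat.pow_le_pow_left
    exact Nat.mul_le_mul_right _ hPc
  have mid_eq : 8 * (Nk L A0 k) * (mk L A0 k * mk L A0 k)^(3*L)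
      = 2^(3 + a + (2*c)*(3*L)) := by
    rw [Nk, mk, ← ha, ← hc, ← pow_add, ← pow_mul]
    rw [show (8 : ℕ) = 2^3 from rfl, ← pow_add, ← pow_add]
    congr 1
    ring
  calc 8 * (Nk L A0 k) * (Pc * mk L A0 k)^(3*L)
      ≤ 2^(3 + a + (2*c)*(3*L)) := by rw [← mid_eq]; exact step1
    _ < 2^((a-1)*(3*L)) := Nat.pow_lt_pow_right (by norm_num) hE
    _ = (2^(a-1))^(3*L) := by rw [← pow_mul]
    _ ≤ (Nk L A0 k - 3*L)^(3*L) := by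
        apply Nat.pow_le_pow_left
        exact two_pow_pred a _ hapos ht

lemma mk_le_Nk (k : ℕ) : mk L A0 k ≤ Nk L A0 k :=
  Nat.pow_le_pow_right (by norm_num) (ck_le_aseq L A0 hL hA k)

lemma small_le_mk (k : ℕ) (s : ℕ) (hs : s ≤ 100*L) : s ≤ mk L A0 k := by
  have h1 := ck_ge L A0 hL hA k
  have h2 := Nat.lt_two_pow_self (n := ck L A0 k)
  calc s ≤ 100*L := hs
    _ ≤ ck L A0 k := h1
    _ ≤ 2^(ck L A0 k) := le_of_lt h2
    _ = mk L A0 k := rfl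

end cond

-- the recursive construction
noncomputable def pick (L A0 u v : ℕ) (k : ℕ) (P : Finset ℕ) : Finset ℕ :=
  if h : P ⊆ Finset.range (2 * Nk L A0 k) ∧ mk L A0 k ≤ Nk L A0 k ∧
      2*u+1 ≤ mk L A0 k ∧ v+1 ≤ mk L A0 k ∧
      8 * (Nk L A0 k)^(u+2) * (mk L A0 k)^(2*u+1) < (Nk L A0 k - (2*u+1))^(2*u+1) ∧
      8 * (Nk L A0 k) * (P.card * mk L A0 k)^(v+1) < (Nk L A0 k - (v+1))^(v+1)
  then (exists_good (Nk L A0 k) (mk L A0 k) u v P h.1 h.2.1 h.2.2.1 h.2.2.2.1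
        h.2.2.2.2.1 h.2.2.2.2.2).choose
  else ∅

noncomputable def Pun (L A0 u v : ℕ) : ℕ → Finset ℕ
  | 0 => ∅
  | k+1 => Pun L A0 u v k ∪ pick L A0 u v k (Pun L A0 u v k)

noncomputable def Bk (L A0 u v : ℕ) (k : ℕ) : Finset ℕ := pick L A0 u v k (Pun L A0 u v k)


lemma inv (L A0 u v : ℕ) (hL : 3 ≤ L) (hA : 100*L*L ≤ A0) (hu : u = 2*L) (hv : v = 3*L-1) :
    ∀ k, Pun L A0 u v k ⊆ Finset.range (Nk L A0 k) ∧ (Pun L A0 u v k).card ≤ mk L A0 k ∧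
    (Bk L A0 u v k ⊆ Finset.Ico (Nk L A0 k) (2 * Nk L A0 k) ∧ (Bk L A0 u v k).card = mk L A0 k ∧
     (∀ n, Wcnt (Bk L A0 u v k) n ≤ u) ∧ (∀ n, Xcnt (Pun L A0 u v k) (Bk L A0 u v k) n ≤ v)) := by
  subst hu
  subst hv
  set u := 2*L with hu
  set v := 3*L-1 with hv
  have hcond : ∀ k, Pun L A0 u v k ⊆ Finset.range (Nk L A0 k) →
      (Pun L A0 u v k).card ≤ mk L A0 k →
      (Bk L A0 u v k ⊆ Finset.Ico (Nk L A0 k) (2 * Nk L A0 k) ∧ (Bk L A0 u v k).card = mk L A0 k ∧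
       (∀ n, Wcnt (Bk L A0 u v k) n ≤ u) ∧ (∀ n, Xcnt (Pun L A0 u v k) (Bk L A0 u v k) n ≤ v)) := by
    intro k hsub hcard
    have hc : Pun L A0 u v k ⊆ Finset.range (2 * Nk L A0 k) ∧ mk L A0 k ≤ Nk L A0 k ∧
        2*u+1 ≤ mk L A0 k ∧ v+1 ≤ mk L A0 k ∧
        8 * (Nk L A0 k)^(u+2) * (mk L A0 k)^(2*u+1) < (Nk L A0 k - (2*u+1))^(2*u+1) ∧
        8 * (Nk L A0 k) * ((Pun L A0 u v k).card * mk L A0 k)^(v+1) <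
          (Nk L A0 k - (v+1))^(v+1) := by
      refine ⟨?_, mk_le_Nk L A0 hL hA k, ?_, ?_, ?_, ?_⟩
      · exact hsub.trans (Finset.range_subset_range.2 (by omega))
      · apply small_le_mk L A0 hL hA k _ (by omega)
      · apply small_le_mk L A0 hL hA k _ (by omega)
      · have h := condH1 L A0 hL hA k
        rw [hu]
        convert h using 3 <;> omega
      · have h := condH2 L A0 hL hA k (Pun L A0 u v k).card hcard
        rw [hv]
        exact h
    have hBk : Bk L A0 u v k = (exists_good (Nk L A0 k) (mk L A0 k) u v (Pun L A0 u v k)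
        hc.1 hc.2.1 hc.2.2.1 hc.2.2.2.1 hc.2.2.2.2.1 hc.2.2.2.2.2).choose := by
      rw [Bk, pick, dif_pos hc]
    rw [hBk]
    exact (exists_good (Nk L A0 k) (mk L A0 k) u v (Pun L A0 u v k)
        hc.1 hc.2.1 hc.2.2.1 hc.2.2.2.1 hc.2.2.2.2.1 hc.2.2.2.2.2).choose_spec
  intro k
  induction k with
  | zero =>
    have h1 : Pun L A0 u v 0 ⊆ Finset.range (Nk L A0 0) := by
      rw [Pun]; intro x hx; exact absurd hx (Finset.notMem_empty x)
    have h2 : (Pun L A0 u v 0).card ≤ mk L A0 0 := by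
      rw [Pun]; simp [mk]
    exact ⟨h1, h2, hcond 0 h1 h2⟩
  | succ k ih =>
    obtain ⟨hs, hc2, hB⟩ := ih
    have hPunSucc : Pun L A0 u v (k+1) = Pun L A0 u v k ∪ Bk L A0 u v k := rfl
    have hNmono : 2 * Nk L A0 k ≤ Nk L A0 (k+1) := by
      have := aseq_step L A0 hL hA k
      rw [Nk, Nk]
      calc 2 * 2^(aseq L A0 k) = 2^(aseq L A0 k + 1) := by rw [pow_succ]; ring
        _ ≤ 2^(aseq L A0 (k+1)) := Nat.pow_le_pow_right (by norm_num) (by omega)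
    have h1 : Pun L A0 u v (k+1) ⊆ Finset.range (Nk L A0 (k+1)) := by
      rw [hPunSucc]
      apply Finset.union_subset
      · exact hs.trans (Finset.range_subset_range.2 (by omega))
      · intro x hx
        have := hB.1 hx
        rw [Finset.mem_Ico] at this
        rw [Finset.mem_range]
        omega
    have h2 : (Pun L A0 u v (k+1)).card ≤ mk L A0 (k+1) := by
      rw [hPunSucc]
      calc (Pun L A0 u v k ∪ Bk L A0 u v k).card
          ≤ (Pun L A0 u v k).card + (Bk L A0 u v k).card := Finset.card_union_le _ _
        _ ≤ mk L A0 k + mk L A0 k := by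
            have := hB.2.1
            omega
        _ = 2^(ck L A0 k + 1) := by rw [mk, pow_succ]; ring
        _ ≤ 2^(ck L A0 (k+1)) := Nat.pow_le_pow_right (by norm_num) (ck_mono L A0 hL hA k)
        _ = mk L A0 (k+1) := rfl
    exact ⟨h1, h2, hcond (k+1) h1 h2⟩



lemma Pun_succ (L A0 u v k : ℕ) : Pun L A0 u v (k+1) = Pun L A0 u v k ∪ Bk L A0 u v k := rfl

lemma aseq_mono' (L A0 : ℕ) (hL : 3 ≤ L) (hA : 100*L*L ≤ A0) {j k : ℕ} (h : j ≤ k) :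
    aseq L A0 j ≤ aseq L A0 k := by
  induction k with
  | zero =>
    have : j = 0 := by omega
    subst this
    exact le_rfl
  | succ k ih =>
    rcases Nat.lt_or_ge j (k+1) with h' | h'
    · have h1 := aseq_step L A0 hL hA k
      have h2 := ih (by omega)
      omega
    · have : j = k+1 := by omega
      subst this
      exact le_rfl

lemma Nk_gap (L A0 : ℕ) (hL : 3 ≤ L) (hA : 100*L*L ≤ A0) {j k : ℕ} (h : j < k) :
    16 * Nk L A0 j ≤ Nk L A0 k := by
  have h1 : aseq L A0 j + 4 ≤ aseq L A0 (j+1) := by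
    have := aseq_step L A0 hL hA j
    omega
  have h2 : aseq L A0 (j+1) ≤ aseq L A0 k := aseq_mono' L A0 hL hA (by omega)
  rw [Nk, Nk]
  calc 16 * 2^(aseq L A0 j) = 2^(aseq L A0 j + 4) := by rw [pow_add]; ring
    _ ≤ 2^(aseq L A0 k) := Nat.pow_le_pow_right (by norm_num) (by omega)

lemma Bk_sub_Pun (L A0 u v : ℕ) {j k : ℕ} (h : j < k) : Bk L A0 u v j ⊆ Pun L A0 u v k := by
  induction k with
  | zero => omega
  | succ k ih =>
    rw [Pun_succ]
    rcases Nat.lt_or_ge j k with h' | h'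
    · exact (ih h').trans Finset.subset_union_left
    · have : j = k := by omega
      subst this
      exact Finset.subset_union_right

-- the set S
def S (L A0 u v : ℕ) : Set ℕ := {x | ∃ k, x ∈ Bk L A0 u v k}

lemma S_pos (L A0 u v : ℕ) (hL : 3 ≤ L) (hA : 100*L*L ≤ A0) (hu : u = 2*L) (hv : v = 3*L-1) :
    S L A0 u v ⊆ {n | 0 < n} := by
  intro x hx
  obtain ⟨k, hk⟩ := hx
  have h1 := ((inv L A0 u v hL hA hu hv k).2.2.1) hk
  rw [Finset.mem_Ico] at h1
  have : 0 < Nk L A0 k := Nat.pow_pos (by norm_num)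
  simp only [Set.mem_setOf_eq]
  omega

-- locate the block of the larger element
lemma loc (L A0 u v : ℕ) (hL : 3 ≤ L) (hA : 100*L*L ≤ A0) (hu : u = 2*L) (hv : v = 3*L-1)
    {x y k n : ℕ} (hxy : x ≤ y) (hsum : x + y = n) (hy : y ∈ Bk L A0 u v k) :
    Nk L A0 k ≤ n ∧ n < 4 * Nk L A0 k := by
  have h1 := ((inv L A0 u v hL hA hu hv k).2.2.1) hy
  rw [Finset.mem_Ico] at h1
  omega

lemma loc_unique (L A0 u v : ℕ) (hL : 3 ≤ L) (hA : 100*L*L ≤ A0) {k k' n : ℕ}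
    (h1 : Nk L A0 k ≤ n) (h2 : n < 4 * Nk L A0 k)
    (h3 : Nk L A0 k' ≤ n) (h4 : n < 4 * Nk L A0 k') : k = k' := by
  by_contra hne
  have hNpos : 0 < Nk L A0 k := Nat.pow_pos (by norm_num)
  have hNpos' : 0 < Nk L A0 k' := Nat.pow_pos (by norm_num)
  rcases Nat.lt_or_ge k k' with h | h
  · have := Nk_gap L A0 hL hA h
    omega
  · have hkk : k' < k := by omega
    have := Nk_gap L A0 hL hA hkk
    omega

-- bound on representations
lemma rep_bound (L A0 u v : ℕ) (hL : 3 ≤ L) (hA : 100*L*L ≤ A0) (hu : u = 2*L) (hv : v = 3*L-1)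
    (n : ℕ) :
    ({p : ℕ × ℕ | p.1 ∈ S L A0 u v ∧ p.2 ∈ S L A0 u v ∧ p.1 ≤ p.2 ∧ p.1 + p.2 = n}.ncard ≤ u + v) := by
  set R := {p : ℕ × ℕ | p.1 ∈ S L A0 u v ∧ p.2 ∈ S L A0 u v ∧ p.1 ≤ p.2 ∧ p.1 + p.2 = n} with hR
  rcases Set.eq_empty_or_nonempty R with hRe | ⟨p₀, hp₀⟩
  · rw [hRe, Set.ncard_empty]; omega
  · obtain ⟨hx₀, hy₀, hle₀, hsum₀⟩ := hp₀
    obtain ⟨k₀, hk₀⟩ := hy₀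
    have hloc₀ := loc L A0 u v hL hA hu hv hle₀ hsum₀ hk₀
    set A := (Bk L A0 u v k₀).filter (fun x => x ≤ n - x ∧ n - x ∈ Bk L A0 u v k₀) ∪
             (Pun L A0 u v k₀).filter (fun a => a ≤ n ∧ n - a ∈ Bk L A0 u v k₀) with hAdef
    have hsub : R ⊆ (fun x => (x, n - x)) '' (↑A : Set ℕ) := by
      rintro ⟨x, y⟩ ⟨hx, hy, hle, hsum⟩
      obtain ⟨k₁, hk₁⟩ := hy
      have hloc₁ := loc L A0 u v hL hA hu hv hle hsum hk₁
      have hkeq : k₁ = k₀ := loc_unique L A0 u v hL hA hloc₁.1 hloc₁.2 hloc₀.1 hloc₀.2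
      subst hkeq
      obtain ⟨j, hj⟩ := hx
      have hxA : x ∈ A := by
        rw [hAdef, Finset.mem_union]
        have hyIco := ((inv L A0 u v hL hA hu hv k₁).2.2.1) hk₁
        rw [Finset.mem_Ico] at hyIco
        rcases Nat.lt_trichotomy j k₁ with hjk | hjk | hjk
        · right
          rw [Finset.mem_filter]
          refine ⟨Bk_sub_Pun L A0 u v hjk hj, by omega, ?_⟩
          have : n - x = y := by omega
          rw [this]; exact hk₁
        · subst hjk
          left
          rw [Finset.mem_filter]
          refine ⟨hj, by omega, ?_⟩
          have : n - x = y := by omega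
          rw [this]; exact hk₁
        · exfalso
          have hxIco := ((inv L A0 u v hL hA hu hv j).2.2.1) hj
          rw [Finset.mem_Ico] at hxIco
          have := Nk_gap L A0 hL hA hjk
          omega
      refine ⟨x, hxA, ?_⟩
      have hnx : n - x = y := by omega
      simp [hnx]
    have hAcard : A.card ≤ u + v := by
      calc A.card ≤ ((Bk L A0 u v k₀).filter (fun x => x ≤ n - x ∧ n - x ∈ Bk L A0 u v k₀)).card
            + ((Pun L A0 u v k₀).filter (fun a => a ≤ n ∧ n - a ∈ Bk L A0 u v k₀)).card :=
            Finset.card_union_le _ _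
        _ ≤ u + v := Nat.add_le_add (((inv L A0 u v hL hA hu hv k₀).2.2.2.2.1) n)
            (((inv L A0 u v hL hA hu hv k₀).2.2.2.2.2) n)
    calc R.ncard ≤ ((fun x => (x, n - x)) '' (↑A : Set ℕ)).ncard :=
          Set.ncard_le_ncard hsub ((A.finite_toSet.image _))
      _ ≤ (↑A : Set ℕ).ncard := Set.ncard_image_le A.finite_toSet
      _ = A.card := Set.ncard_coe_finset A
      _ ≤ u + v := hAcard


lemma count_expo (L : ℕ) (ε : ℝ) (hL : 3 ≤ L) (hεL : 2 ≤ ε * L) (hε : 0 < ε) (hε2 : ε < 1/2)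
    (A B C : ℕ) (hA : 100*L*L ≤ A) (hB1 : A ≤ B) (hB2 : L*B ≤ (L+1)*A)
    (hC : A*(L-1) < C*(2*L) + 2*L) :
    ((B:ℝ)+1) * (1/2 - ε) < C := by
  have hL1 : (1:ℕ) ≤ L := by omega
  have hLR : (3:ℝ) ≤ L := by exact_mod_cast hL
  have hAR : (900:ℝ) ≤ A := by
    have : 900 ≤ 100*L*L := by nlinarith
    have h2 : (900:ℕ) ≤ A := le_trans this hA
    exact_mod_cast h2
  have f1 : (L:ℝ)*B ≤ (L:ℝ)*A + A := by
    have := hB2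
    have h2 : ((L*B : ℕ) : ℝ) ≤ (((L+1)*A : ℕ) : ℝ) := by exact_mod_cast this
    push_cast at h2
    linarith
  have f2 : 2*(A:ℝ) ≤ ε*((L:ℝ)*B) := by
    have hBR : (A:ℝ) ≤ B := by exact_mod_cast hB1
    have h1 : 2*(B:ℝ) ≤ (ε*L)*B := by
      apply mul_le_mul_of_nonneg_right hεL (by positivity)
    calc 2*(A:ℝ) ≤ 2*(B:ℝ) := by linarith
      _ ≤ (ε*L)*B := h1
      _ = ε*((L:ℝ)*B) := by ring
  have f3 : (A:ℝ)*((L:ℝ)-1) < (C:ℝ)*(2*L) + 2*L := by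
    have h2 : ((A*(L-1) : ℕ) : ℝ) < ((C*(2*L) + 2*L : ℕ) : ℝ) := by exact_mod_cast hC
    rw [Nat.cast_mul, Nat.cast_sub hL1] at h2
    push_cast at h2
    linarith
  have f4 : 0 ≤ ε*(L:ℝ) := by positivity
  have key : ((B:ℝ)+1) * (1/2 - ε) * (2*L) < (C:ℝ)*(2*L) := by
    have exp : ((B:ℝ)+1)*(1/2-ε)*(2*(L:ℝ))
        = (L:ℝ)*B + L - 2*(ε*((L:ℝ)*B)) - 2*(ε*(L:ℝ)) := by ring
    have f5 : 3*(L:ℝ) ≤ A := by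
      have h3 : 3*L ≤ 100*L*L := by nlinarith
      have h4 : (3*L : ℕ) ≤ A := le_trans h3 hA
      exact_mod_cast h4
    rw [exp]
    linarith
  have h2L : (0:ℝ) < 2*L := by positivity
  exact lt_of_mul_lt_mul_right key (by positivity)


lemma aseq_ge_k (L A0 : ℕ) (hL : 3 ≤ L) (hA : 100*L*L ≤ A0) (k : ℕ) : k ≤ aseq L A0 k := by
  induction k with
  | zero => omega
  | succ k ih =>
    have := aseq_step L A0 hL hA k
    omega

lemma count_lb (L A0 u v : ℕ) (ε : ℝ) (hL : 3 ≤ L) (hA : 100*L*L ≤ A0)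
    (hu : u = 2*L) (hv : v = 3*L-1) (hε : 0 < ε) (hεL : 2 ≤ ε * L) :
    ∀ᶠ n : ℕ in atTop,
      (n : ℝ) ^ ((1 : ℝ) / 2 - ε) < (((S L A0 u v) ∩ Set.Icc 1 n).ncard : ℝ) := by
  rw [eventually_atTop]
  refine ⟨2 * Nk L A0 0, fun n hn => ?_⟩
  have hNpos0 : 0 < Nk L A0 0 := Nat.pow_pos (by norm_num)
  have hn1 : 1 ≤ n := by omega
  -- the block index
  set P : ℕ → Prop := fun j => 2 * Nk L A0 j ≤ n with hP
  have hdec : DecidablePred P := fun j => by rw [hP]; infer_instance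
  set k := Nat.findGreatest P n with hk
  have hP0 : P 0 := hn
  have hspec : P k := Nat.findGreatest_spec (Nat.zero_le n) hP0
  have hkn : k < n := by
    have h1 : k ≤ aseq L A0 k := aseq_ge_k L A0 hL hA k
    have h2 : aseq L A0 k < 2 ^ (aseq L A0 k) := Nat.lt_two_pow_self
    have h3 : 2 * Nk L A0 k ≤ n := hspec
    rw [Nk] at h3
    omega
  have hmax : ¬ P (k+1) := Nat.findGreatest_is_greatest (P := P) (n := n) (k := k+1) (by omega) (by omega)
  have hnlt : n < 2 * Nk L A0 (k+1) := by
    rw [hP] at hmax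
    omega
  -- counting from below by the block k
  have hBsub : ↑(Bk L A0 u v k) ⊆ (S L A0 u v) ∩ Set.Icc 1 n := by
    intro x hx
    rw [Finset.mem_coe] at hx
    have hIco := ((inv L A0 u v hL hA hu hv k).2.2.1) hx
    rw [Finset.mem_Ico] at hIco
    have hNpos : 0 < Nk L A0 k := Nat.pow_pos (by norm_num)
    have h3 : 2 * Nk L A0 k ≤ n := hspec
    refine ⟨⟨k, hx⟩, ?_⟩
    rw [Set.mem_Icc]
    omega
  have hfin : ((S L A0 u v) ∩ Set.Icc 1 n).Finite :=
    Set.Finite.subset (Set.finite_Icc 1 n) Set.inter_subset_right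
  have hcard : mk L A0 k ≤ ((S L A0 u v) ∩ Set.Icc 1 n).ncard := by
    have h1 : (↑(Bk L A0 u v k) : Set ℕ).ncard ≤ ((S L A0 u v) ∩ Set.Icc 1 n).ncard :=
      Set.ncard_le_ncard hBsub hfin
    rw [Set.ncard_coe_finset, (inv L A0 u v hL hA hu hv k).2.2.2.1] at h1
    exact h1
  have hcast : (mk L A0 k : ℝ) ≤ (((S L A0 u v) ∩ Set.Icc 1 n).ncard : ℝ) := by
    exact_mod_cast hcard
  refine lt_of_lt_of_le ?_ hcast
  -- now the real computation
  rcases le_or_gt (1/2 : ℝ) ε with hεbig | hεsmall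
  · have h1 : (n:ℝ) ^ ((1:ℝ)/2 - ε) ≤ 1 := by
      apply Real.rpow_le_one_of_one_le_of_nonpos
      · exact_mod_cast hn1
      · linarith
    have h2 : (1:ℝ) < mk L A0 k := by
      have h3 : 100*L ≤ ck L A0 k := ck_ge L A0 hL hA k
      have h4 : 2 ≤ mk L A0 k := by
        calc 2 = 2^1 := rfl
          _ ≤ 2^(ck L A0 k) := Nat.pow_le_pow_right (by norm_num) (by omega)
      exact_mod_cast h4
    linarith
  · have he : (0:ℝ) ≤ 1/2 - ε := by linarith
    set M := aseq L A0 (k+1) + 1 with hM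
    have hnle : (n:ℝ) ≤ (2:ℝ)^(M:ℕ) := by
      have h1 : n < 2^M := by
        rw [hM]
        have : 2 * Nk L A0 (k+1) = 2^(aseq L A0 (k+1) + 1) := by
          rw [Nk, pow_succ]; ring
        omega
      have h2 : (n:ℝ) < ((2^M : ℕ) : ℝ) := by exact_mod_cast h1
      push_cast at h2
      linarith
    have hexpo : (M:ℝ) * ((1:ℝ)/2 - ε) < (ck L A0 k : ℝ) := by
      have h := count_expo L ε hL hεL hε hεsmall
        (aseq L A0 k) (aseq L A0 (k+1)) (ck L A0 k)
        (aseq_big L A0 hL hA k)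
        (aseq_mono' L A0 hL hA (by omega))
        (aseq_succ_le L A0 hL hA k)
        (ck_lb L A0 hL hA k)
      rw [hM]
      push_cast
      push_cast at h
      linarith
    calc (n:ℝ) ^ ((1:ℝ)/2 - ε)
        ≤ ((2:ℝ)^(M:ℕ)) ^ ((1:ℝ)/2 - ε) := by
          apply Real.rpow_le_rpow (by positivity) hnle he
      _ = (2:ℝ) ^ ((M:ℝ) * ((1:ℝ)/2 - ε)) := by
          rw [← Real.rpow_natCast 2 M, ← Real.rpow_mul (by norm_num)]
      _ < (2:ℝ) ^ ((ck L A0 k : ℝ)) := by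
          exact Real.rpow_lt_rpow_left_iff (by norm_num) |>.2 hexpo
      _ = (mk L A0 k : ℝ) := by
          rw [Real.rpow_natCast, mk]
          push_cast
          ring



theorem erdos_renyi_B2' (ε : ℝ) (hε : 0 < ε) :
    ∃ g : ℕ, 0 < g ∧ ∃ S : Set ℕ, S ⊆ {n | 0 < n} ∧
      (∀ n : ℕ, 0 < n →
        ({p : ℕ × ℕ | p.1 ∈ S ∧ p.2 ∈ S ∧ p.1 ≤ p.2 ∧ p.1 + p.2 = n}.ncard ≤ g)) ∧
      (∀ᶠ n : ℕ in Filter.atTop,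
        (n : ℝ) ^ ((1 : ℝ) / 2 - ε) < ((S ∩ Set.Icc 1 n).ncard : ℝ)) := by
  set L : ℕ := ⌈2/ε⌉₊ + 2 with hLdef
  have hL : 3 ≤ L := by
    have h1 : 0 < ⌈2/ε⌉₊ := Nat.ceil_pos.2 (by positivity)
    omega
  have hεL : 2 ≤ ε * L := by
    have h1 : (2/ε : ℝ) ≤ (⌈2/ε⌉₊ : ℝ) := Nat.le_ceil _
    have h2 : ((⌈2/ε⌉₊ : ℕ) : ℝ) ≤ (L : ℝ) := by
      have : (⌈2/ε⌉₊ : ℕ) ≤ L := by omega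
      exact_mod_cast this
    have h3 : (2/ε : ℝ) ≤ (L : ℝ) := le_trans h1 h2
    calc (2:ℝ) = (2/ε) * ε := by field_simp
      _ ≤ (L:ℝ) * ε := by
          apply mul_le_mul_of_nonneg_right h3 (le_of_lt hε)
      _ = ε * L := by ring
  set A0 : ℕ := 100*L*L with hA0def
  set u : ℕ := 2*L with hudef
  set v : ℕ := 3*L-1 with hvdef
  have hA : 100*L*L ≤ A0 := le_rfl
  refine ⟨u+v, by omega, S L A0 u v, S_pos L A0 u v hL hA rfl rfl, ?_, ?_⟩
  · intro n hn
    exact rep_bound L A0 u v hL hA rfl rfl n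
  · exact count_lb L A0 u v ε hL hA rfl rfl hε hεL

end ER


end ERproof

/-- **Erdős–Rényi**: for every `ε > 0` there is `g ≥ 1` and a set `S` of positive integers
of type `B₂(g)` with `card (S ∩ {1, …, n}) > n ^ (1/2 - ε)` for all sufficiently large `n`. -/
theorem erdos_renyi_B2 (ε : ℝ) (hε : 0 < ε) :
    ∃ g : ℕ, 0 < g ∧ ∃ S : Set ℕ, S ⊆ {n | 0 < n} ∧
      (∀ n : ℕ, 0 < n →
        ({p : ℕ × ℕ | p.1 ∈ S ∧ p.2 ∈ S ∧ p.1 ≤ p.2 ∧ p.1 + p.2 = n}.ncard ≤ g)) ∧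
      (∀ᶠ n : ℕ in atTop,
        (n : ℝ) ^ ((1 : ℝ) / 2 - ε) < ((S ∩ Set.Icc 1 n).ncard : ℝ)) := by
  exact ER.erdos_renyi_B2' ε hε
end

section
/- Let m ≥ 2 be an integer, let s = (m−1)/m + θ with 0 < θ < 1/m, and fix signs ε₁, …, ε_m ∈ {+1, −1}. Then there is a constant C (depending only on m and s) such that for every integer n: the sum of n₁^{−s} n₂^{−s} ⋯ n_m^{−s} over all m-tuples (n₁, …, n_m) of positive integers with ε₁ n₁ + ε₂ n₂ + … + ε_m n_m = n is at most C if n = 0, and at most C · |n|^{−mθ} if n ≠ 0. -/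
open scoped ENNReal
open Finset

namespace SRB
lemma antitoneOn_rpow_neg {γ : ℝ} (hγ : 0 < γ) {a b : ℝ} (ha : 0 < a) :
    AntitoneOn (fun x : ℝ => x ^ (-γ)) (Set.Icc a b) := by
  intro x hx y hy hxy
  exact Real.rpow_le_rpow_of_nonpos (lt_of_lt_of_le ha hx.1) hxy (by linarith)

/-- Partial sum estimate: `∑_{b=1}^{M} b^{-γ} ≤ (1 + 1/(1-γ)) M^{1-γ}`. -/
lemma sum_rpow_le {γ : ℝ} (hγ0 : 0 < γ) (hγ1 : γ < 1) (M : ℕ) (hM : 1 ≤ M) :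
    ∑ i ∈ Finset.range M, ((i + 1 : ℕ) : ℝ) ^ (-γ) ≤ (1 + 1 / (1 - γ)) * (M : ℝ) ^ (1 - γ) := by
  obtain ⟨M, rfl⟩ : ∃ k, M = k + 1 := ⟨M - 1, (Nat.succ_pred_eq_of_pos hM).symm⟩
  rw [Finset.sum_range_succ' (fun i => ((i + 1 : ℕ) : ℝ) ^ (-γ)) M]
  have hMR : (1:ℝ) ≤ ((M + 1 : ℕ) : ℝ) := by exact_mod_cast Nat.one_le_iff_ne_zero.2 (Nat.succ_ne_zero M)
  have key : ∑ i ∈ Finset.range M, ((i + 1 + 1 : ℕ) : ℝ) ^ (-γ)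
      ≤ (1 / (1 - γ)) * ((M + 1 : ℕ) : ℝ) ^ (1 - γ) := by
    have hA : AntitoneOn (fun x : ℝ => x ^ (-γ)) (Set.Icc (1:ℝ) (1 + (M:ℕ))) :=
      antitoneOn_rpow_neg hγ0 one_pos
    have h1 := hA.sum_le_integral
    have hI : ∫ x in (1:ℝ)..(1 + (M:ℕ)), x ^ (-γ)
        = ((1 + (M:ℕ):ℝ) ^ (-γ + 1) - 1 ^ (-γ + 1)) / (-γ + 1) := by
      rw [integral_rpow (Or.inl (by linarith))]
    calc ∑ i ∈ Finset.range M, ((i + 1 + 1 : ℕ) : ℝ) ^ (-γ)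
        = ∑ i ∈ Finset.range M, ((1:ℝ) + ((i + 1 : ℕ):ℝ)) ^ (-γ) := by
          apply Finset.sum_congr rfl; intro i _; push_cast; ring_nf
      _ ≤ ∫ x in (1:ℝ)..(1 + (M:ℕ)), x ^ (-γ) := h1
      _ = ((1 + (M:ℕ):ℝ) ^ (-γ + 1) - 1 ^ (-γ + 1)) / (-γ + 1) := hI
      _ ≤ (1 / (1 - γ)) * ((M + 1 : ℕ) : ℝ) ^ (1 - γ) := by
          rw [Real.one_rpow]
          have : (1 + (M:ℕ):ℝ) = ((M + 1 : ℕ) : ℝ) := by push_cast; ring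
          rw [this]
          have hpos : (0:ℝ) < 1 - γ := by linarith
          have : (-γ + 1) = 1 - γ := by ring
          rw [this, div_eq_mul_inv, mul_comm]
          rw [one_div]
          have h2 : ((M + 1 : ℕ) : ℝ) ^ (1 - γ) - 1 ≤ ((M + 1 : ℕ) : ℝ) ^ (1 - γ) := by linarith
          exact mul_le_mul_of_nonneg_left h2 (by positivity)
  have h0 : ((0 + 1 : ℕ) : ℝ) ^ (-γ) = 1 := by norm_num
  calc ∑ i ∈ Finset.range M, ((i + 1 + 1 : ℕ) : ℝ) ^ (-γ) + ((0 + 1 : ℕ) : ℝ) ^ (-γ)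
      ≤ (1 / (1 - γ)) * ((M + 1 : ℕ) : ℝ) ^ (1 - γ) + 1 := by rw [h0]; linarith [key]
    _ ≤ (1 + 1 / (1 - γ)) * ((M + 1 : ℕ) : ℝ) ^ (1 - γ) := by
        have h1 : (1:ℝ) ≤ ((M + 1 : ℕ) : ℝ) ^ (1 - γ) := Real.one_le_rpow hMR (by linarith)
        have hpos : (0:ℝ) < 1 - γ := by linarith
        nlinarith [Real.rpow_nonneg (le_trans zero_le_one hMR) (1-γ)]

/-- Tail estimate: `∑_{i<k} (B+i+1)^{-p} ≤ B^{1-p}/(p-1)` for `p > 1`, `B ≥ 1`. -/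
lemma sum_tail_rpow_le {p : ℝ} (hp : 1 < p) (B : ℕ) (hB : 1 ≤ B) (k : ℕ) :
    ∑ i ∈ Finset.range k, ((B + (i + 1) : ℕ) : ℝ) ^ (-p) ≤ (1 / (p - 1)) * (B : ℝ) ^ (1 - p) := by
  have hBR : (1:ℝ) ≤ (B : ℝ) := by exact_mod_cast hB
  have hA : AntitoneOn (fun x : ℝ => x ^ (-p)) (Set.Icc (B:ℝ) ((B:ℝ) + (k:ℕ))) :=
    antitoneOn_rpow_neg (by linarith) (by linarith)
  have h1 := hA.sum_le_integral
  have hI : ∫ x in (B:ℝ)..((B:ℝ) + (k:ℕ)), x ^ (-p)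
      = (((B:ℝ) + (k:ℕ)) ^ (-p + 1) - (B:ℝ) ^ (-p + 1)) / (-p + 1) := by
    have c1 : -p ≠ -1 := by
      intro h; have hp1 : p = 1 := by linarith [neg_eq_iff_eq_neg.1 h]
      linarith
    have c2 : (0:ℝ) ∉ Set.uIcc (B:ℝ) ((B:ℝ) + (k:ℕ)) := by
      intro h
      rw [Set.mem_uIcc] at h
      rcases h with ⟨h1, _⟩ | ⟨_, h2⟩
      · linarith
      · nlinarith [Nat.cast_nonneg (α := ℝ) k]
    rw [integral_rpow (Or.inr ⟨c1, c2⟩)]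
  calc ∑ i ∈ Finset.range k, ((B + (i + 1) : ℕ) : ℝ) ^ (-p)
      = ∑ i ∈ Finset.range k, ((B:ℝ) + ((i + 1 : ℕ):ℝ)) ^ (-p) := by
        apply Finset.sum_congr rfl; intro i _; norm_num
    _ ≤ ∫ x in (B:ℝ)..((B:ℝ) + (k:ℕ)), x ^ (-p) := h1
    _ = (((B:ℝ) + (k:ℕ)) ^ (-p + 1) - (B:ℝ) ^ (-p + 1)) / (-p + 1) := hI
    _ ≤ (1 / (p - 1)) * (B : ℝ) ^ (1 - p) := by
        have hneg : -p + 1 < 0 := by linarith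
        have h2 : (0:ℝ) ≤ ((B:ℝ) + (k:ℕ)) ^ (-p + 1) := Real.rpow_nonneg (by positivity) _
        have h3 : (-p + 1) = -(p - 1) := by ring
        rw [div_le_iff_of_neg (by linarith)]
        have : (1 - p) = -p + 1 := by ring
        rw [this]
        have hpos : (0:ℝ) < p - 1 := by linarith
        have hBnn : (0:ℝ) ≤ (B:ℝ) ^ (-p+1) := Real.rpow_nonneg (by linarith) _
        calc (1 / (p - 1)) * (B : ℝ) ^ (-p+1) * (-p + 1)
            = -(B : ℝ) ^ (-p+1) * ((p-1) / (p-1)) := by ring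
          _ = -(B : ℝ) ^ (-p+1) := by rw [div_self (ne_of_gt hpos)]; ring
          _ ≤ ((B:ℝ) + (k:ℕ)) ^ (-p + 1) - (B:ℝ) ^ (-p + 1) := by linarith

noncomputable def w (γ : ℝ) (b : ℕ) : ℝ≥0∞ := if b = 0 then 0 else (b : ℝ≥0∞) ^ (-γ)

lemma w_ne_top {γ : ℝ} (hγ : 0 < γ) (b : ℕ) : w γ b ≠ ⊤ := by
  unfold w
  split
  · simp
  · next h =>
    intro htop
    rw [ENNReal.rpow_eq_top_iff] at htop
    rcases htop with ⟨h0, _⟩ | ⟨h1, _⟩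
    · exact h (by exact_mod_cast h0)
    · exact (ENNReal.natCast_ne_top b) h1

lemma w_eq_ofReal {γ : ℝ} (b : ℕ) (hb : b ≠ 0) :
    w γ b = ENNReal.ofReal ((b : ℝ) ^ (-γ)) := by
  unfold w
  rw [if_neg hb, ← ENNReal.ofReal_rpow_of_pos (by positivity), ENNReal.ofReal_natCast]

lemma rpow_anti {x y : ℝ≥0∞} {δ : ℝ} (hδ : 0 ≤ δ) (hxy : x ≤ y) :
    y ^ (-δ) ≤ x ^ (-δ) := by
  rw [ENNReal.rpow_neg, ENNReal.rpow_neg]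
  exact ENNReal.inv_le_inv.2 (ENNReal.rpow_le_rpow hxy hδ)


/-- ENNReal partial sum bound. -/
lemma sum_w_le {γ : ℝ} (hγ0 : 0 < γ) (hγ1 : γ < 1) (M : ℕ) (hM : 1 ≤ M) :
    ∑ b ∈ Finset.range (M + 1), w γ b
      ≤ ENNReal.ofReal ((1 + 1 / (1 - γ)) * (M : ℝ) ^ (1 - γ)) := by
  rw [Finset.sum_range_succ' (w γ) M]
  have h0 : w γ 0 = 0 := by simp [w]
  rw [h0, add_zero]
  have : ∀ i ∈ Finset.range M, w γ (i + 1) = ENNReal.ofReal (((i + 1 : ℕ) : ℝ) ^ (-γ)) := by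
    intro i _; exact w_eq_ofReal _ (Nat.succ_ne_zero i)
  rw [Finset.sum_congr rfl this, ← ENNReal.ofReal_sum_of_nonneg
    (fun i _ => Real.rpow_nonneg (by positivity) _)]
  exact ENNReal.ofReal_le_ofReal (sum_rpow_le hγ0 hγ1 M hM)

/-- ENNReal tail bound. -/
lemma tsum_tail_le {p : ℝ} (hp : 1 < p) (B : ℕ) (hB : 1 ≤ B) :
    ∑' b : ℕ, (if B < b then (b : ℝ≥0∞) ^ (-p) else 0)
      ≤ ENNReal.ofReal ((1 / (p - 1)) * (B : ℝ) ^ (1 - p)) := by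
  rw [ENNReal.tsum_eq_iSup_sum]
  refine iSup_le fun st => ?_
  obtain ⟨k, hk⟩ := st.exists_nat_subset_range
  have h1 : ∑ b ∈ st, (if B < b then (b : ℝ≥0∞) ^ (-p) else 0)
      ≤ ∑ b ∈ Finset.range (B + 1 + k), (if B < b then (b : ℝ≥0∞) ^ (-p) else 0) := by
    apply Finset.sum_le_sum_of_subset
    exact hk.trans (Finset.range_subset_range.2 (by omega))
  refine h1.trans ?_
  have h2 : ∑ b ∈ Finset.range (B + 1 + k), (if B < b then (b : ℝ≥0∞) ^ (-p) else 0)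
      = ∑ b ∈ Finset.Ico (B + 1) (B + 1 + k), (b : ℝ≥0∞) ^ (-p) := by
    rw [Finset.range_eq_Ico, ← Finset.sum_Ico_consecutive _ (Nat.zero_le (B + 1)) (by omega)]
    have hz : ∑ b ∈ Finset.Ico 0 (B + 1), (if B < b then (b : ℝ≥0∞) ^ (-p) else 0) = 0 := by
      apply Finset.sum_eq_zero
      intro b hb
      rw [Finset.mem_Ico] at hb
      rw [if_neg (by omega)]
    rw [hz, zero_add]
    apply Finset.sum_congr rfl
    intro b hb
    rw [Finset.mem_Ico] at hb
    rw [if_pos (by omega)]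
  rw [h2, Finset.sum_Ico_eq_sum_range]
  have h3 : ∀ i ∈ Finset.range (B + 1 + k - (B + 1)),
      ((B + 1 + i : ℕ) : ℝ≥0∞) ^ (-p) = ENNReal.ofReal (((B + (i + 1) : ℕ) : ℝ) ^ (-p)) := by
    intro i _
    have : B + 1 + i = B + (i + 1) := by omega
    rw [this, ← ENNReal.ofReal_rpow_of_pos (by positivity), ENNReal.ofReal_natCast]
  rw [Finset.sum_congr rfl h3, ← ENNReal.ofReal_sum_of_nonneg
    (fun i _ => Real.rpow_nonneg (by positivity) _)]
  exact ENNReal.ofReal_le_ofReal (sum_tail_rpow_le hp B hB _)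

/-- Zeta-type bound. -/
lemma tsum_w_le {p : ℝ} (hp : 1 < p) :
    ∑' b : ℕ, w p b ≤ ENNReal.ofReal (1 + 1 / (p - 1)) := by
  have hle : ∀ b : ℕ, w p b ≤ (if b = 1 then 1 else 0) + (if 1 < b then (b : ℝ≥0∞) ^ (-p) else 0) := by
    intro b
    match b with
    | 0 => simp [w]
    | 1 => simp [w]
    | (n+2) =>
      unfold w
      rw [if_neg (by omega), if_neg (by omega), if_pos (by omega), zero_add]
  calc ∑' b : ℕ, w p b
      ≤ ∑' b : ℕ, ((if b = 1 then 1 else 0) + (if 1 < b then (b : ℝ≥0∞) ^ (-p) else 0)) :=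
        ENNReal.tsum_le_tsum hle
    _ = (∑' b : ℕ, (if b = 1 then (1:ℝ≥0∞) else 0)) + ∑' b : ℕ, (if 1 < b then (b : ℝ≥0∞) ^ (-p) else 0) :=
        ENNReal.tsum_add
    _ ≤ 1 + ENNReal.ofReal ((1 / (p - 1)) * (1 : ℝ) ^ (1 - p)) := by
        gcongr
        · rw [tsum_ite_eq]
        · exact_mod_cast tsum_tail_le hp 1 le_rfl
    _ = ENNReal.ofReal (1 + 1 / (p - 1)) := by
        rw [Real.one_rpow, mul_one, ENNReal.ofReal_add (by norm_num) (by have h := sub_pos.2 hp; positivity),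
          ENNReal.ofReal_one]

lemma ofReal_mul_rpow {c e : ℝ} (hc : 0 ≤ c) {M : ℕ} (hM : 1 ≤ M) :
    ENNReal.ofReal (c * (M : ℝ) ^ e) = ENNReal.ofReal c * (M : ℝ≥0∞) ^ e := by
  rw [ENNReal.ofReal_mul hc, ← ENNReal.ofReal_rpow_of_pos (by positivity : (0:ℝ) < (M:ℝ)),
    ENNReal.ofReal_natCast]

/-- Shifted convolution tail bound. -/
lemma tsum_shift_le {γ δ : ℝ} (hγ0 : 0 < γ) (hγ1 : γ < 1) (hδ : 0 < δ) (hgd : 1 < γ + δ)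
    (M : ℕ) (hM : 1 ≤ M) :
    ∑' b : ℕ, w γ b * ((M + b : ℕ) : ℝ≥0∞) ^ (-δ)
      ≤ ENNReal.ofReal ((1 + 1 / (1 - γ)) + 1 / (γ + δ - 1)) * (M : ℝ≥0∞) ^ (1 - γ - δ) := by
  have hM0 : ((M : ℝ≥0∞)) ≠ 0 := Nat.cast_ne_zero.2 (by omega)
  have hMt : ((M : ℝ≥0∞)) ≠ ⊤ := ENNReal.natCast_ne_top M
  have hc1 : (0:ℝ) ≤ 1 + 1 / (1 - γ) := by
    have : (0:ℝ) < 1 - γ := by linarith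
    positivity
  have hc2 : (0:ℝ) ≤ 1 / (γ + δ - 1) := by
    have : (0:ℝ) < γ + δ - 1 := by linarith
    positivity
  have hpt : ∀ b : ℕ, w γ b * ((M + b : ℕ) : ℝ≥0∞) ^ (-δ)
      ≤ (if b ≤ M then w γ b else 0) * (M : ℝ≥0∞) ^ (-δ)
        + (if M < b then (b : ℝ≥0∞) ^ (-(γ + δ)) else 0) := by
    intro b
    by_cases hbM : b ≤ M
    · rw [if_pos hbM, if_neg (by omega)]
      rw [add_zero]
      apply mul_le_mul_right ?_ (w γ b)
      apply rpow_anti (le_of_lt hδ)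
      exact Nat.cast_le.mpr (Nat.le_add_right M b)
    · rw [if_neg hbM, if_pos (by omega), zero_mul, zero_add]
      have hb0 : b ≠ 0 := by omega
      have hbE0 : ((b : ℝ≥0∞)) ≠ 0 := by exact_mod_cast Nat.cast_ne_zero.2 hb0
      have hbEt : ((b : ℝ≥0∞)) ≠ ⊤ := ENNReal.natCast_ne_top b
      have h1 : w γ b * ((M + b : ℕ) : ℝ≥0∞) ^ (-δ) ≤ (b : ℝ≥0∞) ^ (-γ) * (b : ℝ≥0∞) ^ (-δ) := by
        unfold w
        rw [if_neg hb0]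
        apply mul_le_mul_right
        apply rpow_anti (le_of_lt hδ)
        exact Nat.cast_le.mpr (Nat.le_add_left b M)
      refine h1.trans_eq ?_
      rw [← ENNReal.rpow_add _ _ hbE0 hbEt]
      ring_nf
  calc ∑' b : ℕ, w γ b * ((M + b : ℕ) : ℝ≥0∞) ^ (-δ)
      ≤ ∑' b : ℕ, ((if b ≤ M then w γ b else 0) * (M : ℝ≥0∞) ^ (-δ)
        + (if M < b then (b : ℝ≥0∞) ^ (-(γ + δ)) else 0)) := ENNReal.tsum_le_tsum hpt
    _ = (∑' b : ℕ, (if b ≤ M then w γ b else 0)) * (M : ℝ≥0∞) ^ (-δ)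
        + ∑' b : ℕ, (if M < b then (b : ℝ≥0∞) ^ (-(γ + δ)) else 0) := by
        rw [ENNReal.tsum_add, ENNReal.tsum_mul_right]
    _ ≤ ENNReal.ofReal (1 + 1 / (1 - γ)) * (M : ℝ≥0∞) ^ (1 - γ - δ)
        + ENNReal.ofReal (1 / (γ + δ - 1)) * (M : ℝ≥0∞) ^ (1 - γ - δ) := by
        apply add_le_add
        · have hsum : (∑' b : ℕ, (if b ≤ M then w γ b else 0)) = ∑ b ∈ Finset.range (M + 1), w γ b := by
            rw [tsum_eq_sum (s := Finset.range (M + 1))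
              (fun b hb => if_neg (by simp only [Finset.mem_range] at hb; omega))]
            apply Finset.sum_congr rfl
            intro b hb
            rw [Finset.mem_range] at hb
            rw [if_pos (by omega)]
          rw [hsum]
          calc (∑ b ∈ Finset.range (M + 1), w γ b) * (M : ℝ≥0∞) ^ (-δ)
              ≤ ENNReal.ofReal ((1 + 1 / (1 - γ)) * (M : ℝ) ^ (1 - γ)) * (M : ℝ≥0∞) ^ (-δ) :=
                mul_le_mul_left (sum_w_le hγ0 hγ1 M hM) _
            _ = ENNReal.ofReal (1 + 1 / (1 - γ)) * (M : ℝ≥0∞) ^ (1 - γ - δ) := by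
                rw [ofReal_mul_rpow hc1 hM, mul_assoc, ← ENNReal.rpow_add _ _ hM0 hMt]
                ring_nf
        · calc ∑' b : ℕ, (if M < b then (b : ℝ≥0∞) ^ (-(γ + δ)) else 0)
              ≤ ENNReal.ofReal ((1 / (γ + δ - 1)) * (M : ℝ) ^ (1 - (γ + δ))) := tsum_tail_le hgd M hM
            _ = ENNReal.ofReal (1 / (γ + δ - 1)) * (M : ℝ≥0∞) ^ (1 - γ - δ) := by
                rw [ofReal_mul_rpow hc2 hM]
                ring_nf
    _ = ENNReal.ofReal ((1 + 1 / (1 - γ)) + 1 / (γ + δ - 1)) * (M : ℝ≥0∞) ^ (1 - γ - δ) := by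
        rw [ENNReal.ofReal_add hc1 hc2, add_mul]

noncomputable def Bnd (α : ℝ) (n : ℤ) : ℝ≥0∞ := if n = 0 then 1 else (n.natAbs : ℝ≥0∞) ^ (-α)

lemma Bnd_zero (α : ℝ) : Bnd α 0 = 1 := by simp [Bnd]

lemma Bnd_ne_top {α : ℝ} (hα : 0 < α) (n : ℤ) : Bnd α n ≠ ⊤ := by
  unfold Bnd
  split
  · simp
  · next h =>
    intro htop
    rw [ENNReal.rpow_eq_top_iff] at htop
    rcases htop with ⟨h0, _⟩ | ⟨h1, _⟩
    · exact h (by simpa using (Int.natAbs_eq_zero.1 (by exact_mod_cast h0)))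
    · exact (ENNReal.natCast_ne_top _) h1

lemma Bnd_mul_sign {γ : ℝ} {e x : ℤ} (he : e = 1 ∨ e = -1) : Bnd γ (e * x) = Bnd γ x := by
  rcases he with rfl | rfl
  · rw [one_mul]
  · unfold Bnd
    rw [Int.natAbs_mul]
    simp

lemma half_rpow {β : ℝ} (hβ : 0 ≤ β) {N b : ℕ} (hb : N ≤ 2 * b) :
    (b : ℝ≥0∞) ^ (-β) ≤ (2 : ℝ≥0∞) ^ β * (N : ℝ≥0∞) ^ (-β) := by
  have h1 : ((2 * b : ℕ) : ℝ≥0∞) ^ (-β) ≤ (N : ℝ≥0∞) ^ (-β) :=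
    rpow_anti hβ (Nat.cast_le.mpr hb)
  have h2 : ((2 * b : ℕ) : ℝ≥0∞) ^ (-β) = (2 : ℝ≥0∞) ^ (-β) * (b : ℝ≥0∞) ^ (-β) := by
    push_cast
    rw [ENNReal.mul_rpow_of_ne_top (by norm_num) (ENNReal.natCast_ne_top b)]
  have h3 : (2 : ℝ≥0∞) ^ β * (2 : ℝ≥0∞) ^ (-β) = 1 := by
    rw [← ENNReal.rpow_add _ _ (by norm_num) (by norm_num)]
    simp
  calc (b : ℝ≥0∞) ^ (-β) = (2 : ℝ≥0∞) ^ β * ((2 : ℝ≥0∞) ^ (-β) * (b : ℝ≥0∞) ^ (-β)) := by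
        rw [← mul_assoc, h3, one_mul]
    _ = (2 : ℝ≥0∞) ^ β * ((2 * b : ℕ) : ℝ≥0∞) ^ (-β) := by rw [h2]
    _ ≤ (2 : ℝ≥0∞) ^ β * (N : ℝ≥0∞) ^ (-β) := mul_le_mul_right h1 _

/-- the core convolution estimate, shifted form. -/
lemma conv_shift {α β : ℝ} (hα0 : 0 < α) (hα1 : α < 1) (hβ0 : 0 < β) (hβ1 : β < 1)
    (hab : 1 < α + β) :
    ∃ K : ℝ≥0∞, K ≠ ⊤ ∧ ∀ d : ℤ,
      ∑' b : ℕ, w β b * Bnd α (d - b) ≤ K * Bnd (α + β - 1) d := by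
  classical
  have hcα : (0:ℝ) ≤ 1 + 1 / (1 - α) := by
    have : (0:ℝ) < 1 - α := by linarith
    positivity
  have hcβ : (0:ℝ) ≤ 1 + 1 / (1 - β) := by
    have : (0:ℝ) < 1 - β := by linarith
    positivity
  set cα : ℝ := 1 + 1 / (1 - α) with hcαd
  set cβ : ℝ := 1 + 1 / (1 - β) with hcβd
  set cz : ℝ := 1 + 1 / (α + β - 1) with hcz
  set cJβα : ℝ := (1 + 1 / (1 - β)) + 1 / (β + α - 1) with hcJβα
  set cJαβ : ℝ := (1 + 1 / (1 - α)) + 1 / (α + β - 1) with hcJαβ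
  refine ⟨ENNReal.ofReal cz + ENNReal.ofReal cJβα + ENNReal.ofReal cJαβ + 1
      + (2 : ℝ≥0∞) ^ β * ENNReal.ofReal cα + (2 : ℝ≥0∞) ^ α * ENNReal.ofReal cβ, ?_, ?_⟩
  · have h2β : (2 : ℝ≥0∞) ^ β ≠ ⊤ := ENNReal.rpow_ne_top_of_nonneg (le_of_lt hβ0) (by norm_num)
    have h2α : (2 : ℝ≥0∞) ^ α ≠ ⊤ := ENNReal.rpow_ne_top_of_nonneg (le_of_lt hα0) (by norm_num)
    simp only [ne_eq, ENNReal.add_eq_top, ENNReal.mul_eq_top]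
    push_neg
    refine ⟨⟨⟨⟨⟨?_, ?_⟩, ?_⟩, ?_⟩, ?_⟩, ?_⟩ <;>
      simp_all [ENNReal.ofReal_ne_top, ENNReal.one_ne_top]
  intro d
  rcases lt_trichotomy d 0 with hd | hd | hd
  -- case d < 0 : scenario A
  · obtain ⟨N, hN, hdN⟩ : ∃ N : ℕ, 1 ≤ N ∧ d = -(N : ℤ) := ⟨d.natAbs, by omega, by omega⟩
    subst hdN
    have hterm : ∀ b : ℕ, w β b * Bnd α (-(N : ℤ) - b) = w β b * ((N + b : ℕ) : ℝ≥0∞) ^ (-α) := by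
      intro b
      congr 1
      unfold Bnd
      rw [if_neg (by omega)]
      congr 2
      omega
    calc ∑' b : ℕ, w β b * Bnd α (-(N : ℤ) - b)
        = ∑' b : ℕ, w β b * ((N + b : ℕ) : ℝ≥0∞) ^ (-α) := tsum_congr hterm
      _ ≤ ENNReal.ofReal cJβα * (N : ℝ≥0∞) ^ (1 - β - α) :=
          tsum_shift_le hβ0 hβ1 hα0 (by linarith) N hN
      _ = ENNReal.ofReal cJβα * Bnd (α + β - 1) (-(N : ℤ)) := by
          unfold Bnd
          rw [if_neg (by omega)]
          have : (-(N : ℤ)).natAbs = N := by omega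
          rw [this]
          congr 2
          ring
      _ ≤ _ := by
          apply mul_le_mul_left
          rw [show ENNReal.ofReal cz + ENNReal.ofReal cJβα + ENNReal.ofReal cJαβ + 1
              + (2 : ℝ≥0∞) ^ β * ENNReal.ofReal cα + (2 : ℝ≥0∞) ^ α * ENNReal.ofReal cβ
              = ENNReal.ofReal cJβα + (ENNReal.ofReal cz + ENNReal.ofReal cJαβ + 1
              + (2 : ℝ≥0∞) ^ β * ENNReal.ofReal cα + (2 : ℝ≥0∞) ^ α * ENNReal.ofReal cβ) from by ring]
          exact le_self_add
  -- case d = 0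
  · subst hd
    have hterm : ∀ b : ℕ, w β b * Bnd α (0 - b) ≤ w (α + β) b := by
      intro b
      match b with
      | 0 => simp [w]
      | (k+1) =>
        have hb0 : (k + 1 : ℕ) ≠ 0 := Nat.succ_ne_zero k
        unfold w Bnd
        rw [if_neg hb0, if_neg hb0, if_neg (by omega)]
        have : ((0 : ℤ) - (k+1 : ℕ)).natAbs = (k+1 : ℕ) := by omega
        rw [this, ← ENNReal.rpow_add _ _ (Nat.cast_ne_zero.2 hb0) (ENNReal.natCast_ne_top _)]
        apply le_of_eq
        congr 1
        ring
    calc ∑' b : ℕ, w β b * Bnd α (0 - b)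
        ≤ ∑' b : ℕ, w (α + β) b := ENNReal.tsum_le_tsum hterm
      _ ≤ ENNReal.ofReal cz := tsum_w_le hab
      _ = ENNReal.ofReal cz * Bnd (α + β - 1) 0 := by rw [Bnd_zero, mul_one]
      _ ≤ _ := by
          apply mul_le_mul_left
          rw [show ENNReal.ofReal cz + ENNReal.ofReal cJβα + ENNReal.ofReal cJαβ + 1
              + (2 : ℝ≥0∞) ^ β * ENNReal.ofReal cα + (2 : ℝ≥0∞) ^ α * ENNReal.ofReal cβ
              = ENNReal.ofReal cz + (ENNReal.ofReal cJβα + ENNReal.ofReal cJαβ + 1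
              + (2 : ℝ≥0∞) ^ β * ENNReal.ofReal cα + (2 : ℝ≥0∞) ^ α * ENNReal.ofReal cβ) from by ring]
          exact le_self_add
  -- case d > 0 : scenario B
  · obtain ⟨N, hN, hdN⟩ : ∃ N : ℕ, 1 ≤ N ∧ d = (N : ℤ) := ⟨d.natAbs, by omega, by omega⟩
    subst hdN
    have hN0 : ((N : ℝ≥0∞)) ≠ 0 := Nat.cast_ne_zero.2 (by omega)
    have hNt : ((N : ℝ≥0∞)) ≠ ⊤ := ENNReal.natCast_ne_top N
    have hN1 : (1 : ℝ≥0∞) ≤ (N : ℝ≥0∞) := by exact_mod_cast Nat.one_le_cast.2 hN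
    set E : ℝ≥0∞ := (N : ℝ≥0∞) ^ (1 - α - β) with hE
    have hpt : ∀ b : ℕ, w β b * Bnd α ((N : ℤ) - b) ≤
        (if b = N then (N : ℝ≥0∞) ^ (-β) else 0)
        + (2 : ℝ≥0∞) ^ β * (N : ℝ≥0∞) ^ (-β) * (if b < N then ((N - b : ℕ) : ℝ≥0∞) ^ (-α) else 0)
        + (2 : ℝ≥0∞) ^ α * (N : ℝ≥0∞) ^ (-α) * (if b < N then w β b else 0)
        + w α (b - N) * (b : ℝ≥0∞) ^ (-β) := by
      intro b
      rcases lt_trichotomy b N with hb | hb | hb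
      · -- b < N
        have hBnd : Bnd α ((N : ℤ) - b) = ((N - b : ℕ) : ℝ≥0∞) ^ (-α) := by
          unfold Bnd
          rw [if_neg (by omega)]
          congr 2
          omega
        rw [hBnd, if_neg (by omega), if_pos hb, if_pos hb, zero_add]
        by_cases hb0 : b = 0
        · subst hb0
          simp [w]
        · have hwb : w β b = (b : ℝ≥0∞) ^ (-β) := by unfold w; rw [if_neg hb0]
          by_cases h2 : N ≤ 2 * b
          · -- use u1
            have h3 : w β b * ((N - b : ℕ) : ℝ≥0∞) ^ (-α)
                ≤ (2 : ℝ≥0∞) ^ β * (N : ℝ≥0∞) ^ (-β) * ((N - b : ℕ) : ℝ≥0∞) ^ (-α) := by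
              rw [hwb]
              exact mul_le_mul_left (half_rpow (le_of_lt hβ0) h2) _
            refine h3.trans ?_
            rw [show (2 : ℝ≥0∞) ^ β * (N : ℝ≥0∞) ^ (-β) * ((N - b : ℕ) : ℝ≥0∞) ^ (-α)
                + (2 : ℝ≥0∞) ^ α * (N : ℝ≥0∞) ^ (-α) * w β b + w α (b - N) * (b : ℝ≥0∞) ^ (-β)
                = (2 : ℝ≥0∞) ^ β * (N : ℝ≥0∞) ^ (-β) * ((N - b : ℕ) : ℝ≥0∞) ^ (-α)
                + ((2 : ℝ≥0∞) ^ α * (N : ℝ≥0∞) ^ (-α) * w β b + w α (b - N) * (b : ℝ≥0∞) ^ (-β)) from by ring]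
            exact le_self_add
          · -- use u2
            have hNb : N ≤ 2 * (N - b) := by omega
            have h3 : w β b * ((N - b : ℕ) : ℝ≥0∞) ^ (-α)
                ≤ (2 : ℝ≥0∞) ^ α * (N : ℝ≥0∞) ^ (-α) * w β b := by
              calc w β b * ((N - b : ℕ) : ℝ≥0∞) ^ (-α)
                  ≤ w β b * ((2 : ℝ≥0∞) ^ α * (N : ℝ≥0∞) ^ (-α)) :=
                    mul_le_mul_right (half_rpow (le_of_lt hα0) hNb) _
                _ = (2 : ℝ≥0∞) ^ α * (N : ℝ≥0∞) ^ (-α) * w β b := by ring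
            refine h3.trans ?_
            rw [show (2 : ℝ≥0∞) ^ β * (N : ℝ≥0∞) ^ (-β) * ((N - b : ℕ) : ℝ≥0∞) ^ (-α)
                + (2 : ℝ≥0∞) ^ α * (N : ℝ≥0∞) ^ (-α) * w β b + w α (b - N) * (b : ℝ≥0∞) ^ (-β)
                = (2 : ℝ≥0∞) ^ α * (N : ℝ≥0∞) ^ (-α) * w β b
                + ((2 : ℝ≥0∞) ^ β * (N : ℝ≥0∞) ^ (-β) * ((N - b : ℕ) : ℝ≥0∞) ^ (-α)
                  + w α (b - N) * (b : ℝ≥0∞) ^ (-β)) from by ring]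
            exact le_self_add
      · -- b = N
        subst hb
        have hBnd : Bnd α ((b : ℤ) - b) = 1 := by
          unfold Bnd
          rw [if_pos (by omega)]
        rw [hBnd, mul_one, if_pos rfl, if_neg (lt_irrefl b), if_neg (lt_irrefl b)]
        have hwN : w β b = (b : ℝ≥0∞) ^ (-β) := by unfold w; rw [if_neg (by omega)]
        rw [hwN]
        rw [show ((b:ℝ≥0∞)) ^ (-β) + (2 : ℝ≥0∞) ^ β * ((b:ℝ≥0∞)) ^ (-β) * 0
            + (2 : ℝ≥0∞) ^ α * ((b:ℝ≥0∞)) ^ (-α) * 0 + w α (b - b) * (b : ℝ≥0∞) ^ (-β)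
            = ((b:ℝ≥0∞)) ^ (-β) + w α (b - b) * (b : ℝ≥0∞) ^ (-β) from by ring]
        exact le_self_add
      · -- b > N
        have hBnd : Bnd α ((N : ℤ) - b) = ((b - N : ℕ) : ℝ≥0∞) ^ (-α) := by
          unfold Bnd
          rw [if_neg (by omega)]
          congr 2
          omega
        rw [hBnd]
        have heq : w β b * ((b - N : ℕ) : ℝ≥0∞) ^ (-α) = w α (b - N) * (b : ℝ≥0∞) ^ (-β) := by
          unfold w
          rw [if_neg (by omega), if_neg (by omega)]
          ring
        rw [heq]
        rw [show (if b = N then ((N:ℝ≥0∞)) ^ (-β) else 0)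
            + (2 : ℝ≥0∞) ^ β * ((N:ℝ≥0∞)) ^ (-β) * (if b < N then ((N - b : ℕ) : ℝ≥0∞) ^ (-α) else 0)
            + (2 : ℝ≥0∞) ^ α * ((N:ℝ≥0∞)) ^ (-α) * (if b < N then w β b else 0)
            + w α (b - N) * (b : ℝ≥0∞) ^ (-β)
            = w α (b - N) * (b : ℝ≥0∞) ^ (-β)
            + ((if b = N then ((N:ℝ≥0∞)) ^ (-β) else 0)
            + (2 : ℝ≥0∞) ^ β * ((N:ℝ≥0∞)) ^ (-β) * (if b < N then ((N - b : ℕ) : ℝ≥0∞) ^ (-α) else 0)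
            + (2 : ℝ≥0∞) ^ α * ((N:ℝ≥0∞)) ^ (-α) * (if b < N then w β b else 0)) from by ring]
        exact le_self_add
    -- now sum the four majorants
    have hs1 : ∑' b : ℕ, (if b = N then (N : ℝ≥0∞) ^ (-β) else 0) ≤ 1 * E := by
      rw [tsum_ite_eq, one_mul, hE]
      exact ENNReal.rpow_le_rpow_of_exponent_le hN1 (by linarith)
    have hsum_refl : ∑ b ∈ Finset.range N, ((N - b : ℕ) : ℝ≥0∞) ^ (-α)
        = ∑ b ∈ Finset.range N, ((b + 1 : ℕ) : ℝ≥0∞) ^ (-α) := by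
      rw [← Finset.sum_range_reflect (fun j => ((j + 1 : ℕ) : ℝ≥0∞) ^ (-α)) N]
      apply Finset.sum_congr rfl
      intro b hb
      rw [Finset.mem_range] at hb
      congr 2
      omega
    have hs2 : ∑' b : ℕ, (2 : ℝ≥0∞) ^ β * (N : ℝ≥0∞) ^ (-β)
        * (if b < N then ((N - b : ℕ) : ℝ≥0∞) ^ (-α) else 0)
        ≤ ((2 : ℝ≥0∞) ^ β * ENNReal.ofReal cα) * E := by
      rw [ENNReal.tsum_mul_left]
      have hinner : ∑' b : ℕ, (if b < N then ((N - b : ℕ) : ℝ≥0∞) ^ (-α) else 0)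
          ≤ ENNReal.ofReal (cα * (N : ℝ) ^ (1 - α)) := by
        rw [tsum_eq_sum (s := Finset.range N)
          (fun b hb => if_neg (by simp only [Finset.mem_range] at hb; omega))]
        have h4 : ∀ b ∈ Finset.range N, (if b < N then ((N - b : ℕ) : ℝ≥0∞) ^ (-α) else 0)
            = ((N - b : ℕ) : ℝ≥0∞) ^ (-α) := by
          intro b hb
          rw [Finset.mem_range] at hb
          rw [if_pos hb]
        rw [Finset.sum_congr rfl h4, hsum_refl]
        have h5 : ∑ b ∈ Finset.range N, ((b + 1 : ℕ) : ℝ≥0∞) ^ (-α)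
            = ∑ b ∈ Finset.range (N+1), w α b := by
          rw [Finset.sum_range_succ' (w α) N]
          have hw0 : w α 0 = 0 := by simp [w]
          rw [hw0, add_zero]
          apply Finset.sum_congr rfl
          intro b _
          unfold w
          rw [if_neg (Nat.succ_ne_zero b)]
        rw [h5]
        exact sum_w_le hα0 hα1 N hN
      calc (2 : ℝ≥0∞) ^ β * (N : ℝ≥0∞) ^ (-β)
            * ∑' b : ℕ, (if b < N then ((N - b : ℕ) : ℝ≥0∞) ^ (-α) else 0)
          ≤ (2 : ℝ≥0∞) ^ β * (N : ℝ≥0∞) ^ (-β) * ENNReal.ofReal (cα * (N : ℝ) ^ (1 - α)) :=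
            mul_le_mul_right hinner _
        _ = ((2 : ℝ≥0∞) ^ β * ENNReal.ofReal cα) * E := by
            rw [ofReal_mul_rpow hcα hN, hE]
            rw [mul_assoc, mul_assoc]
            congr 1
            rw [← mul_assoc, mul_comm ((N : ℝ≥0∞) ^ (-β)), mul_assoc,
              ← ENNReal.rpow_add _ _ hN0 hNt]
            congr 2
            ring
    have hs3 : ∑' b : ℕ, (2 : ℝ≥0∞) ^ α * (N : ℝ≥0∞) ^ (-α) * (if b < N then w β b else 0)
        ≤ ((2 : ℝ≥0∞) ^ α * ENNReal.ofReal cβ) * E := by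
      rw [ENNReal.tsum_mul_left]
      have hinner : ∑' b : ℕ, (if b < N then w β b else 0)
          ≤ ENNReal.ofReal (cβ * (N : ℝ) ^ (1 - β)) := by
        rw [tsum_eq_sum (s := Finset.range N)
          (fun b hb => if_neg (by simp only [Finset.mem_range] at hb; omega))]
        have h1 : ∑ b ∈ Finset.range N, (if b < N then w β b else 0)
            = ∑ b ∈ Finset.range N, w β b := by
          apply Finset.sum_congr rfl
          intro b hb
          rw [Finset.mem_range] at hb
          rw [if_pos hb]
        rw [h1]
        calc ∑ b ∈ Finset.range N, w β b ≤ ∑ b ∈ Finset.range (N+1), w β b :=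
              Finset.sum_le_sum_of_subset (Finset.range_subset_range.2 (by omega))
          _ ≤ _ := sum_w_le hβ0 hβ1 N hN
      calc (2 : ℝ≥0∞) ^ α * (N : ℝ≥0∞) ^ (-α) * ∑' b : ℕ, (if b < N then w β b else 0)
          ≤ (2 : ℝ≥0∞) ^ α * (N : ℝ≥0∞) ^ (-α) * ENNReal.ofReal (cβ * (N : ℝ) ^ (1 - β)) :=
            mul_le_mul_right hinner _
        _ = ((2 : ℝ≥0∞) ^ α * ENNReal.ofReal cβ) * E := by
            rw [ofReal_mul_rpow hcβ hN, hE]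
            rw [mul_assoc, mul_assoc]
            congr 1
            rw [← mul_assoc, mul_comm ((N : ℝ≥0∞) ^ (-α)), mul_assoc,
              ← ENNReal.rpow_add _ _ hN0 hNt]
            congr 2
            ring
    have hs4 : ∑' b : ℕ, w α (b - N) * (b : ℝ≥0∞) ^ (-β) ≤ ENNReal.ofReal cJαβ * E := by
      have hinj : Function.Injective (fun c : ℕ => N + c) := fun a b h => Nat.add_left_cancel h
      have hsupp : Function.support (fun b : ℕ => w α (b - N) * (b : ℝ≥0∞) ^ (-β))
          ⊆ Set.range (fun c : ℕ => N + c) := by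
        intro b hb
        rw [Function.mem_support] at hb
        by_cases hbN : N ≤ b
        · exact ⟨b - N, show N + (b - N) = b by omega⟩
        · exfalso
          apply hb
          have : b - N = 0 := by omega
          simp [this, w]
      rw [← hinj.tsum_eq hsupp]
      have hc : ∀ c : ℕ, w α (N + c - N) * ((N + c : ℕ) : ℝ≥0∞) ^ (-β)
          = w α c * ((N + c : ℕ) : ℝ≥0∞) ^ (-β) := by
        intro c
        congr 2
        omega
      calc ∑' c : ℕ, w α (N + c - N) * ((N + c : ℕ) : ℝ≥0∞) ^ (-β)
          = ∑' c : ℕ, w α c * ((N + c : ℕ) : ℝ≥0∞) ^ (-β) := tsum_congr hc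
        _ ≤ ENNReal.ofReal cJαβ * (N : ℝ≥0∞) ^ (1 - α - β) :=
            tsum_shift_le hα0 hα1 hβ0 hab N hN
        _ = ENNReal.ofReal cJαβ * E := by rw [hE]
    have hEBnd : Bnd (α + β - 1) (N : ℤ) = E := by
      unfold Bnd
      rw [if_neg (by omega), hE]
      have : ((N : ℤ)).natAbs = N := by omega
      rw [this]
      congr 1
      ring
    calc ∑' b : ℕ, w β b * Bnd α ((N : ℤ) - b)
        ≤ ∑' b : ℕ, ((if b = N then (N : ℝ≥0∞) ^ (-β) else 0)
          + (2 : ℝ≥0∞) ^ β * (N : ℝ≥0∞) ^ (-β) * (if b < N then ((N - b : ℕ) : ℝ≥0∞) ^ (-α) else 0)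
          + (2 : ℝ≥0∞) ^ α * (N : ℝ≥0∞) ^ (-α) * (if b < N then w β b else 0)
          + w α (b - N) * (b : ℝ≥0∞) ^ (-β)) := ENNReal.tsum_le_tsum hpt
      _ = (∑' b : ℕ, (if b = N then (N : ℝ≥0∞) ^ (-β) else 0))
          + (∑' b : ℕ, (2 : ℝ≥0∞) ^ β * (N : ℝ≥0∞) ^ (-β)
            * (if b < N then ((N - b : ℕ) : ℝ≥0∞) ^ (-α) else 0))
          + (∑' b : ℕ, (2 : ℝ≥0∞) ^ α * (N : ℝ≥0∞) ^ (-α) * (if b < N then w β b else 0))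
          + (∑' b : ℕ, w α (b - N) * (b : ℝ≥0∞) ^ (-β)) := by
          rw [ENNReal.tsum_add, ENNReal.tsum_add, ENNReal.tsum_add]
      _ ≤ 1 * E + ((2 : ℝ≥0∞) ^ β * ENNReal.ofReal cα) * E
          + ((2 : ℝ≥0∞) ^ α * ENNReal.ofReal cβ) * E + ENNReal.ofReal cJαβ * E := by
          gcongr
      _ = (1 + (2 : ℝ≥0∞) ^ β * ENNReal.ofReal cα + (2 : ℝ≥0∞) ^ α * ENNReal.ofReal cβ
          + ENNReal.ofReal cJαβ) * E := by ring
      _ ≤ (ENNReal.ofReal cz + ENNReal.ofReal cJβα + ENNReal.ofReal cJαβ + 1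
          + (2 : ℝ≥0∞) ^ β * ENNReal.ofReal cα + (2 : ℝ≥0∞) ^ α * ENNReal.ofReal cβ) * E := by
          apply mul_le_mul_left
          rw [show ENNReal.ofReal cz + ENNReal.ofReal cJβα + ENNReal.ofReal cJαβ + 1
              + (2 : ℝ≥0∞) ^ β * ENNReal.ofReal cα + (2 : ℝ≥0∞) ^ α * ENNReal.ofReal cβ
              = (1 + (2 : ℝ≥0∞) ^ β * ENNReal.ofReal cα + (2 : ℝ≥0∞) ^ α * ENNReal.ofReal cβ
              + ENNReal.ofReal cJαβ) + (ENNReal.ofReal cz + ENNReal.ofReal cJβα) from by ring]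
          exact le_self_add
      _ = _ := by rw [hEBnd]

noncomputable def S (s : ℝ) {k : ℕ} (ε : Fin k → ℤ) (n : ℤ) : ℝ≥0∞ :=
  ∑' f : Fin k → ℕ, if ∑ i, ε i * (f i : ℤ) = n then ∏ i, w s (f i) else 0

lemma S_succ (s : ℝ) {k : ℕ} (ε : Fin (k + 1) → ℤ) (n : ℤ) :
    S s ε n = ∑' b : ℕ, w s b * S s (fun i => ε i.succ) (n - ε 0 * b) := by
  classical
  unfold S
  rw [← (Fin.consEquiv (fun _ : Fin (k + 1) => ℕ)).tsum_eq, ENNReal.tsum_prod']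
  apply tsum_congr
  intro b
  rw [← ENNReal.tsum_mul_left]
  apply tsum_congr
  intro g
  have hce : (Fin.consEquiv fun _ : Fin (k + 1) => ℕ) (b, g) = Fin.cons b g := rfl
  rw [hce]
  have hcond : (∑ i, ε i * ((Fin.cons b g : Fin (k+1) → ℕ) i : ℤ) = n)
      ↔ (∑ i, ε i.succ * (g i : ℤ) = n - ε 0 * b) := by
    rw [Fin.sum_univ_succ, Fin.cons_zero]
    simp only [Fin.cons_succ]
    constructor
    · intro h; linarith
    · intro h; linarith
  have hprod : ∏ i, w s ((Fin.cons b g : Fin (k+1) → ℕ) i)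
      = w s b * ∏ i, w s (g i) := by
    rw [Fin.prod_univ_succ, Fin.cons_zero]
    simp only [Fin.cons_succ]
  rw [if_congr hcond hprod rfl, mul_ite, mul_zero]

lemma S_one {s : ℝ} (hs0 : 0 < s) (ε : Fin 1 → ℤ) (hε : ε 0 = 1 ∨ ε 0 = -1) (n : ℤ) :
    S s ε n ≤ Bnd s n := by
  classical
  unfold S
  rw [← (Equiv.funUnique (Fin 1) ℕ).symm.tsum_eq]
  have hred : ∀ b : ℕ, (if ∑ i, ε i * (((Equiv.funUnique (Fin 1) ℕ).symm b) i : ℤ) = n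
      then ∏ i, w s (((Equiv.funUnique (Fin 1) ℕ).symm b) i) else 0)
      = (if ε 0 * b = n then w s b else 0) := by
    intro b
    have h1 : ∑ i, ε i * (((Equiv.funUnique (Fin 1) ℕ).symm b) i : ℤ) = ε 0 * b := by
      rw [Fin.sum_univ_one]; rfl
    have h2 : ∏ i, w s (((Equiv.funUnique (Fin 1) ℕ).symm b) i) = w s b := by
      rw [Fin.prod_univ_one]; rfl
    rw [if_congr (by rw [h1]) h2 rfl]
  rw [tsum_congr hred]
  have hb : ∀ b : ℕ, (if ε 0 * b = n then w s b else 0)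
      ≤ (if b = n.natAbs then Bnd s n else 0) := by
    intro b
    by_cases h : ε 0 * b = n
    · rw [if_pos h]
      have hbn : b = n.natAbs := by rcases hε with h1 | h1 <;> rw [h1] at h <;> omega
      rw [if_pos hbn]
      by_cases hn : n = 0
      · have : b = 0 := by omega
        simp [this, w, hn, Bnd]
      · unfold w Bnd
        rw [if_neg hn, if_neg (by omega), hbn]
    · rw [if_neg h]
      exact zero_le
  calc ∑' b : ℕ, (if ε 0 * b = n then w s b else 0)
      ≤ ∑' b : ℕ, (if b = n.natAbs then Bnd s n else 0) := ENNReal.tsum_le_tsum hb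
    _ = Bnd s n := tsum_ite_eq _ _

lemma S_le {δ s : ℝ} {m : ℕ} (hδ : 0 < δ) (hs : s = 1 - δ) (hmδ : (m : ℝ) * δ < 1) :
    ∀ k : ℕ, 1 ≤ k → k ≤ m → ∀ ε : Fin k → ℤ, (∀ i, ε i = 1 ∨ ε i = -1) →
      ∃ K : ℝ≥0∞, K ≠ ⊤ ∧ ∀ n : ℤ, S s ε n ≤ K * Bnd (1 - k * δ) n := by
  intro k
  induction k with
  | zero => omega
  | succ k ih =>
    intro _ hkm ε hε
    have hm1 : (1 : ℝ) ≤ (m : ℝ) := by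
      have : 1 ≤ m := by omega
      exact_mod_cast this
    have hδ1 : δ < 1 := by nlinarith
    have hs0 : 0 < s := by rw [hs]; linarith
    by_cases hk0 : k = 0
    · subst hk0
      refine ⟨1, ENNReal.one_ne_top, fun n => ?_⟩
      rw [one_mul]
      have : (1 : ℝ) - (1 : ℕ) * δ = s := by rw [hs]; push_cast; ring
      rw [this]
      exact S_one hs0 ε (hε 0) n
    · have hk1 : 1 ≤ k := by omega
      have hkm' : k ≤ m := by omega
      obtain ⟨K, hK, hKb⟩ := ih hk1 hkm' (fun i => ε i.succ) (fun i => hε i.succ)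
      have hkR : (k : ℝ) ≤ (m : ℝ) := by exact_mod_cast hkm'
      have hk1R : (1 : ℝ) ≤ (k : ℝ) := by exact_mod_cast hk1
      have hkk : ((k : ℝ) + 1) ≤ (m : ℝ) := by exact_mod_cast hkm
      have hα0 : 0 < 1 - (k : ℝ) * δ := by nlinarith
      have hα1 : 1 - (k : ℝ) * δ < 1 := by nlinarith
      have hβ1 : s < 1 := by rw [hs]; linarith
      have hab : 1 < (1 - (k : ℝ) * δ) + s := by rw [hs]; nlinarith
      obtain ⟨K2, hK2, hK2b⟩ := conv_shift hα0 hα1 hs0 hβ1 hab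
      refine ⟨K * K2, ENNReal.mul_ne_top hK hK2, fun n => ?_⟩
      have he := hε 0
      have hee : ε 0 * ε 0 = 1 := by rcases he with h | h <;> rw [h] <;> ring
      calc S s ε n = ∑' b : ℕ, w s b * S s (fun i => ε i.succ) (n - ε 0 * b) := S_succ s ε n
        _ ≤ ∑' b : ℕ, w s b * (K * Bnd (1 - k * δ) (n - ε 0 * b)) :=
            ENNReal.tsum_le_tsum (fun b => mul_le_mul_right (hKb _) _)
        _ = K * ∑' b : ℕ, w s b * Bnd (1 - k * δ) (n - ε 0 * b) := by
            rw [← ENNReal.tsum_mul_left]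
            exact tsum_congr (fun b => by ring)
        _ = K * ∑' b : ℕ, w s b * Bnd (1 - k * δ) (ε 0 * n - b) := by
            congr 1
            apply tsum_congr
            intro b
            congr 1
            rw [← Bnd_mul_sign (γ := 1 - k * δ) (x := ε 0 * n - b) he]
            congr 1
            have : ε 0 * (ε 0 * n - b) = (ε 0 * ε 0) * n - ε 0 * b := by ring
            rw [this, hee, one_mul]
        _ ≤ K * (K2 * Bnd ((1 - k * δ) + s - 1) (ε 0 * n)) :=
            mul_le_mul_right (hK2b (ε 0 * n)) _
        _ = (K * K2) * Bnd (1 - (k + 1 : ℕ) * δ) n := by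
            rw [Bnd_mul_sign he, ← mul_assoc]
            congr 2
            rw [hs]
            push_cast
            ring

lemma w_le_one {s : ℝ} (hs : 0 ≤ s) (b : ℕ) : w s b ≤ 1 := by
  unfold w
  split
  · exact zero_le_one
  · next h =>
    have h1 : (1 : ℝ≥0∞) ≤ (b : ℝ≥0∞) := by exact_mod_cast Nat.one_le_cast.2 (by omega)
    calc (b : ℝ≥0∞) ^ (-s) ≤ (b : ℝ≥0∞) ^ (0 : ℝ) :=
          ENNReal.rpow_le_rpow_of_exponent_le h1 (by linarith)
      _ = 1 := ENNReal.rpow_zero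

end SRB

open SRB in
/-- Let `m ≥ 2`, `s = (m-1)/m + θ` with `0 < θ < 1/m`, and fix signs `ε i ∈ {±1}`. Then there
is a constant `C > 0` (depending only on `m` and `s`) such that for every integer `n` the sum of
`∏ i, (n i) ^ (-s)` over all `m`-tuples of positive integers with `∑ i, ε i * n i = n` is
(summable and) at most `C` if `n = 0`, and at most `C * |n| ^ (-mθ)` if `n ≠ 0`. -/
theorem signed_representation_sum_bound (m : ℕ) (hm : 2 ≤ m) (θ s : ℝ)
    (hθ₀ : 0 < θ) (hθ₁ : θ < 1 / m) (hs : s = (m - 1 : ℝ) / m + θ)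
    (ε : Fin m → ℤ) (hε : ∀ i, ε i = 1 ∨ ε i = -1) :
    ∃ C : ℝ, 0 < C ∧ ∀ n : ℤ,
      Summable (fun f : {f : Fin m → ℕ // (∀ i, 0 < f i) ∧ ∑ i, ε i * (f i : ℤ) = n} =>
        ∏ i, ((f : Fin m → ℕ) i : ℝ) ^ (-s)) ∧
      ∑' f : {f : Fin m → ℕ // (∀ i, 0 < f i) ∧ ∑ i, ε i * (f i : ℤ) = n},
          ∏ i, ((f : Fin m → ℕ) i : ℝ) ^ (-s) ≤
        if n = 0 then C else C * (|n| : ℝ) ^ (-(m * θ)) := by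
  classical
  have hmR : (2 : ℝ) ≤ (m : ℝ) := by exact_mod_cast hm
  have hm0 : (m : ℝ) ≠ 0 := by linarith
  set δ : ℝ := 1 / m - θ with hδdef
  have hδ : 0 < δ := by rw [hδdef]; linarith
  have hs' : s = 1 - δ := by
    rw [hs, hδdef]
    field_simp
    ring
  have hmδ : (m : ℝ) * δ < 1 := by
    rw [hδdef]
    have : (m : ℝ) * (1 / m - θ) = 1 - m * θ := by field_simp
    rw [this]
    nlinarith
  obtain ⟨K, hK, hKb⟩ := S_le hδ hs' hmδ m (by omega) le_rfl ε hε
  have hexp : (1 : ℝ) - m * δ = m * θ := by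
    rw [hδdef]
    field_simp
    ring
  rw [hexp] at hKb
  have hmθ : 0 < (m : ℝ) * θ := by positivity
  have hs0 : 0 < s := by rw [hs']; nlinarith
  refine ⟨K.toReal + 1, by positivity, fun n => ?_⟩
  set g : (Fin m → ℕ) → ℝ≥0∞ :=
    fun f => if ∑ i, ε i * (f i : ℤ) = n then ∏ i, w s (f i) else 0 with hgdef
  have hg_ne_top : ∀ f, g f ≠ ⊤ := by
    intro f
    simp only [hgdef]
    refine ne_top_of_le_ne_top ENNReal.one_ne_top ?_
    split
    · exact Finset.prod_le_one (fun i _ => zero_le) (fun i _ => w_le_one (le_of_lt hs0) _)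
    · exact zero_le_one
  have hsupp : Function.support g
      ⊆ {f : Fin m → ℕ | (∀ i, 0 < f i) ∧ ∑ i, ε i * (f i : ℤ) = n} := by
    intro f hf
    rw [Function.mem_support] at hf
    simp only [hgdef] at hf
    by_cases hc : ∑ i, ε i * (f i : ℤ) = n
    · refine ⟨fun i => ?_, hc⟩
      by_contra hi
      apply hf
      rw [if_pos hc]
      exact Finset.prod_eq_zero (Finset.mem_univ i) (by
        have h0 : f i = 0 := by omega
        simp [h0, w])
    · exact absurd (if_neg hc) hf
  have key : ∑' f : {f : Fin m → ℕ // (∀ i, 0 < f i) ∧ ∑ i, ε i * (f i : ℤ) = n},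
      g f.val = S s ε n := by
    have := tsum_subtype_eq_of_support_subset hsupp
    exact this
  have hpointwise : ∀ f : {f : Fin m → ℕ // (∀ i, 0 < f i) ∧ ∑ i, ε i * (f i : ℤ) = n},
      (g f.val).toReal = ∏ i, ((f : Fin m → ℕ) i : ℝ) ^ (-s) := by
    intro f
    simp only [hgdef]
    rw [if_pos f.2.2, ENNReal.toReal_prod]
    apply Finset.prod_congr rfl
    intro i _
    have hfi : f.val i ≠ 0 := (f.2.1 i).ne'
    unfold w
    rw [if_neg hfi, ← ENNReal.toReal_rpow, ENNReal.toReal_natCast]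
  have hbound := hKb n
  have hBne : K * Bnd (m * θ) n ≠ ⊤ := ENNReal.mul_ne_top hK (Bnd_ne_top hmθ n)
  have htop : (∑' f : {f : Fin m → ℕ // (∀ i, 0 < f i) ∧ ∑ i, ε i * (f i : ℤ) = n},
      g f.val) ≠ ⊤ := by
    rw [key]
    exact ne_top_of_le_ne_top hBne hbound
  constructor
  · exact (ENNReal.summable_toReal htop).congr hpointwise
  · have h1 : ∑' f : {f : Fin m → ℕ // (∀ i, 0 < f i) ∧ ∑ i, ε i * (f i : ℤ) = n},
        ∏ i, ((f : Fin m → ℕ) i : ℝ) ^ (-s)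
        = (S s ε n).toReal := by
      calc ∑' f : {f : Fin m → ℕ // (∀ i, 0 < f i) ∧ ∑ i, ε i * (f i : ℤ) = n},
            ∏ i, ((f : Fin m → ℕ) i : ℝ) ^ (-s)
          = ∑' f : {f : Fin m → ℕ // (∀ i, 0 < f i) ∧ ∑ i, ε i * (f i : ℤ) = n},
            (g f.val).toReal := (tsum_congr hpointwise).symm
        _ = (∑' f : {f : Fin m → ℕ // (∀ i, 0 < f i) ∧ ∑ i, ε i * (f i : ℤ) = n},
            g f.val).toReal := (ENNReal.tsum_toReal_eq
              (fun f : {f : Fin m → ℕ // (∀ i, 0 < f i) ∧ ∑ i, ε i * (f i : ℤ) = n} =>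
                hg_ne_top f.val)).symm
        _ = (S s ε n).toReal := by rw [key]
    rw [h1]
    have h2 : (S s ε n).toReal ≤ (K * Bnd (m * θ) n).toReal := ENNReal.toReal_mono hBne hbound
    by_cases hn : n = 0
    · subst hn
      rw [if_pos rfl]
      refine h2.trans ?_
      rw [Bnd_zero, mul_one]
      linarith [ENNReal.toReal_nonneg (a := K)]
    · rw [if_neg hn]
      refine h2.trans ?_
      have hBval : Bnd (m * θ) n = (n.natAbs : ℝ≥0∞) ^ (-(m * θ)) := by
        unfold Bnd
        rw [if_neg hn]
      rw [hBval, ENNReal.toReal_mul, ← ENNReal.toReal_rpow, ENNReal.toReal_natCast]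
      have habs : |(n : ℝ)| = (n.natAbs : ℝ) := by
        rw [Nat.cast_natAbs (n := n) (α := ℝ), Int.cast_abs]
      rw [habs]
      apply mul_le_mul_of_nonneg_right ?_ (Real.rpow_nonneg (by positivity) _)
      linarith
end

section
/- Let q ≥ 2 and m ≥ 2 be integers, let s = (m−1)/m + θ with 0 < θ < 1/m, and fix signs ε₁, …, ε_m ∈ {+1, −1}. Let δ : ℕ → ⊕_{i∈ℕ} ℤ/qℤ be the bijection sending a natural number to its sequence of base-q digits, i.e. δ(n)_i = ⌊n/q^i⌋ mod q. Then there is a constant C (depending only on q, m and s) such that for every natural number n: the sum of n₁^{−s} ⋯ n_m^{−s} over all m-tuples (n₁, …, n_m) of positive integers with ε₁ δ(n₁) + … + ε_m δ(n_m) = δ(n) in ⊕_{i∈ℕ} ℤ/qℤ is at most C if n = 0, and at most C · n^{−mθ} if n ≥ 1. -/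
/-- The base-`q` digit expansion of a natural number, viewed as a finitely supported element of
`⊕_{i ∈ ℕ} ℤ/qℤ` (here realized inside the product group `ℕ → ZMod q`):
`digitsMap q n i = ⌊n / q^i⌋ mod q`. -/
def digitsMap (q : ℕ) (n : ℕ) : ℕ → ZMod q := fun i => ((n / q ^ i) % q : ℕ)



private lemma aux_digits_zero {q : ℕ} (hq : 2 ≤ q) :
    ∀ b : ℕ, (∀ i, b / q ^ i % q = 0) → b = 0 := by
  intro b
  induction b using Nat.strong_induction_on with
  | _ b ih =>
    intro h
    rcases Nat.eq_zero_or_pos b with h0 | h0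
    · exact h0
    have h1 : b / q = 0 := by
      refine ih (b / q) (Nat.div_lt_self h0 (by omega)) fun i => ?_
      have h2 := h (i + 1)
      rwa [pow_succ', ← Nat.div_div_eq_div_mul] at h2
    have h2 : b % q = 0 := by simpa using h 0
    have h3 := Nat.div_add_mod b q
    rw [h1] at h3
    omega

private lemma aux_digits_inj {q : ℕ} (hq : 2 ≤ q) :
    ∀ a b : ℕ, (∀ i, a / q ^ i % q = b / q ^ i % q) → a = b := by
  intro a
  induction a using Nat.strong_induction_on with
  | _ a ih =>
    intro b h
    rcases Nat.eq_zero_or_pos a with rfl | ha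
    · refine (aux_digits_zero hq b fun i => ?_).symm
      have h2 := (h i).symm
      simpa using h2
    have h1 : a / q = b / q := by
      refine ih (a / q) (Nat.div_lt_self ha (by omega)) (b / q) fun i => ?_
      have h2 := h (i + 1)
      rwa [pow_succ', ← Nat.div_div_eq_div_mul, ← Nat.div_div_eq_div_mul] at h2
    have h2 : a % q = b % q := by simpa using h 0
    have h3 := Nat.div_add_mod a q
    have h4 := Nat.div_add_mod b q
    rw [h1] at h3
    omega

private lemma digit_eq_of_digitsMap_eq {q : ℕ} (hq : 2 ≤ q) {a b : ℕ}
    (h : digitsMap q a = digitsMap q b) (i : ℕ) : a / q ^ i % q = b / q ^ i % q := by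
  haveI : NeZero q := ⟨by omega⟩
  have h0 : 0 < q := by omega
  have h1 := congrFun h i
  simp only [digitsMap] at h1
  have ha : a / q ^ i % q < q := Nat.mod_lt _ h0
  have hb : b / q ^ i % q < q := Nat.mod_lt _ h0
  have h2 := congrArg ZMod.val h1
  rwa [ZMod.val_cast_of_lt ha, ZMod.val_cast_of_lt hb] at h2

private lemma digitsMap_injective {q : ℕ} (hq : 2 ≤ q) : Function.Injective (digitsMap q) :=
  fun a b h => aux_digits_inj hq a b (digit_eq_of_digitsMap_eq hq h)

private lemma digitsMap_eq_zero_of_lt {q : ℕ} (hq : 2 ≤ q) {a k p : ℕ}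
    (ha : a < q ^ k) (hp : k ≤ p) : digitsMap q a p = 0 := by
  have h1 : a / q ^ p = 0 :=
    Nat.div_eq_of_lt (lt_of_lt_of_le ha (Nat.pow_le_pow_right (by omega) hp))
  simp [digitsMap, h1]

private lemma lt_pow_of_digitsMap_eq_zero {q : ℕ} (hq : 2 ≤ q) {a k : ℕ}
    (h : ∀ p, k ≤ p → digitsMap q a p = 0) : a < q ^ k := by
  haveI : NeZero q := ⟨by omega⟩
  have h0 : 0 < q := by omega
  have hdig : ∀ i, (a / q ^ k) / q ^ i % q = 0 := by
    intro i
    rw [Nat.div_div_eq_div_mul, ← pow_add]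
    have h1 := h (k + i) (Nat.le_add_right _ _)
    simp only [digitsMap] at h1
    have hlt : a / q ^ (k + i) % q < q := Nat.mod_lt _ h0
    have h2 := congrArg ZMod.val h1
    rwa [ZMod.val_cast_of_lt hlt, ZMod.val_zero] at h2
  have h3 := aux_digits_zero hq (a / q ^ k) hdig
  have hpow : 0 < q ^ k := pow_pos h0 k
  exact ((Nat.div_eq_zero_iff).mp h3).resolve_left hpow.ne'

open scoped ENNReal


private lemma sum_rpow_le {s : ℝ} (hs0 : 0 < s) (hs1 : s < 1) (K : ℕ) :
    ∑ k ∈ Finset.Icc 1 K, (k : ℝ) ^ (-s) ≤ (1 - s)⁻¹ * (K : ℝ) ^ (1 - s) := by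
  have h1s : (0:ℝ) < 1 - s := by linarith
  induction K with
  | zero =>
    rw [show Finset.Icc 1 0 = (∅ : Finset ℕ) from Finset.Icc_eq_empty (by omega)]
    simp [Real.zero_rpow (by linarith : (1:ℝ) - s ≠ 0)]
  | succ K ih =>
    rw [Finset.sum_Icc_succ_top (by omega : 1 ≤ K + 1)]
    have hK1 : (0:ℝ) < (K:ℝ) + 1 := by positivity
    have amgm := Real.geom_mean_le_arith_mean2_weighted (by linarith : (0:ℝ) ≤ 1 - s) hs0.le
        (by positivity : (0:ℝ) ≤ (K:ℝ)) (by positivity : (0:ℝ) ≤ (K:ℝ)+1) (by ring)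
    have e1 : ((K:ℝ)+1) ^ (1-s) = ((K:ℝ)+1) * ((K:ℝ)+1) ^ (-s) := by
      rw [show (1:ℝ)-s = 1 + (-s) by ring, Real.rpow_add hK1, Real.rpow_one]
    have e2 : (K:ℝ)^(1-s) ≤ ((K:ℝ) + s) * ((K:ℝ)+1)^(-s) := by
      calc (K:ℝ)^(1-s) = (K:ℝ)^(1-s) * (((K:ℝ)+1)^s * ((K:ℝ)+1)^(-s)) := by
            rw [← Real.rpow_add hK1]; norm_num
        _ = ((K:ℝ)^(1-s) * ((K:ℝ)+1)^s) * ((K:ℝ)+1)^(-s) := by ring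
        _ ≤ ((K:ℝ) + s) * ((K:ℝ)+1)^(-s) := by
            refine mul_le_mul_of_nonneg_right (amgm.trans_eq (by ring))
              (Real.rpow_nonneg (by positivity) _)
    have step : (1 - s) * ((K:ℝ)+1) ^ (-s) ≤ ((K:ℝ)+1) ^ (1-s) - (K:ℝ) ^ (1-s) := by
      nlinarith [e1, e2]
    have step' : ((K:ℝ)+1) ^ (-s) ≤ (1-s)⁻¹ * (((K:ℝ)+1) ^ (1-s) - (K:ℝ) ^ (1-s)) := by
      have h2 := mul_le_mul_of_nonneg_left step (inv_nonneg.mpr h1s.le)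
      rwa [← mul_assoc, inv_mul_cancel₀ h1s.ne', one_mul] at h2
    rw [mul_sub] at step'
    push_cast
    linarith

private lemma step2 {α : ℝ} (hα : 0 < α) {x : ℝ} (hx : 1 ≤ x) :
    α * (x+1) ^ (-(1+α)) ≤ x ^ (-α) - (x+1) ^ (-α) := by
  have hx0 : (0:ℝ) < x := by linarith
  have hx1 : (0:ℝ) < x + 1 := by linarith
  set u : ℝ := 1/(x+1) with hu
  have hu0 : 0 < u := by positivity
  have hu1 : u < 1 := by rw [hu, div_lt_one hx1]; linarith
  have k1 : (1 - u : ℝ) ≤ Real.exp (-u) := by have := Real.add_one_le_exp (-u); linarith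
  have k2 : (1 - u : ℝ)^α ≤ Real.exp (-u * α) := by
    calc (1-u:ℝ)^α ≤ (Real.exp (-u))^α := Real.rpow_le_rpow (by linarith) k1 hα.le
      _ = Real.exp (-u * α) := by rw [Real.rpow_def_of_pos (Real.exp_pos _), Real.log_exp]
  have k3 : (1 + α*u : ℝ) ≤ Real.exp (α*u) := by have := Real.add_one_le_exp (α*u); linarith
  have key : (1 + α*u) * (1-u)^α ≤ 1 := by
    calc (1 + α*u) * (1-u)^α ≤ Real.exp (α*u) * Real.exp (-u*α) := by
          exact mul_le_mul k3 k2 (Real.rpow_nonneg (by linarith) _) (Real.exp_pos _).le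
      _ = 1 := by rw [← Real.exp_add, show α*u + -u*α = 0 by ring, Real.exp_zero]
  have hxu : x = (x+1) * (1 - u) := by rw [hu]; field_simp; ring
  have e1 : x ^ (-α) = (x+1)^(-α) * (1-u)^(-α) := by
    have h2 := Real.mul_rpow hx1.le (by linarith : (0:ℝ) ≤ 1-u) (z := -α)
    rw [← hxu] at h2
    exact h2
  have hpow_pos : (0:ℝ) < (1-u)^α := Real.rpow_pos_of_pos (by linarith) _
  have e2 : 1 + α * u ≤ (1-u)^(-α) := by
    rw [Real.rpow_neg (by linarith : (0:ℝ) ≤ 1-u), inv_eq_one_div, le_div_iff₀ hpow_pos]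
    exact key
  have e3 : (x+1)^(-α) * u = (x+1)^(-(1+α)) := by
    rw [hu, show -(1+α) = -α + (-1) by ring, Real.rpow_add hx1, Real.rpow_neg_one, one_div]
  have e4 : (0:ℝ) ≤ (x+1)^(-α) := Real.rpow_nonneg hx1.le _
  have h5 := mul_le_mul_of_nonneg_left e2 e4
  rw [← e1] at h5
  nlinarith [h5, e3]

private lemma sum_Ioc_rpow_le {α : ℝ} (hα : 0 < α) (M N : ℕ) :
    ∑ x ∈ Finset.Ioc M N, (x:ℝ) ^ (-(1+α)) ≤ (1 + α⁻¹) * ((M:ℝ)+1) ^ (-α) := by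
  rcases le_or_gt N M with hNM | hMN
  · rw [Finset.Ioc_eq_empty (by omega)]
    simp only [Finset.sum_empty]
    positivity
  · have Q : ∀ N, M + 1 ≤ N → ∑ x ∈ Finset.Ioc M N, (x:ℝ)^(-(1+α)) + α⁻¹ * (N:ℝ)^(-α)
        ≤ ((M:ℝ)+1)^(-(1+α)) + α⁻¹ * ((M:ℝ)+1)^(-α) := by
      intro N hN
      induction N, hN using Nat.le_induction with
      | base =>
        rw [show Finset.Ioc M (M+1) = {M+1} by
          ext x; simp only [Finset.mem_Ioc, Finset.mem_singleton]; omega]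
        rw [Finset.sum_singleton]
        push_cast
        exact le_rfl
      | succ N hN ih =>
        rw [Finset.sum_Ioc_succ_top (by omega : M ≤ N)]
        have hN1 : (1:ℝ) ≤ (N:ℝ) := by exact_mod_cast (by omega : 1 ≤ N)
        have hstep := step2 hα hN1
        have h2 := mul_le_mul_of_nonneg_left hstep (inv_nonneg.mpr hα.le)
        rw [← mul_assoc, inv_mul_cancel₀ hα.ne', one_mul, mul_sub] at h2
        push_cast
        push_cast at ih
        linarith
    have h3 := Q N (by omega)
    have h4 : (0:ℝ) ≤ α⁻¹ * (N:ℝ)^(-α) := by positivity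
    have h5 : ((M:ℝ)+1)^(-(1+α)) ≤ ((M:ℝ)+1)^(-α) := by
      refine Real.rpow_le_rpow_of_exponent_le (by push_cast; linarith [Nat.cast_nonneg (α := ℝ) M]) (by linarith)
    nlinarith [h3, h4, h5]

private lemma tail_rpow_le {α : ℝ} (hα : 0 < α) (M : ℕ) (F : Finset ℕ) :
    ∑ x ∈ F, (if M < x then (x:ℝ) ^ (-(1+α)) else 0) ≤ (1 + α⁻¹) * ((M:ℝ)+1) ^ (-α) := by
  classical
  rw [← Finset.sum_filter]
  have hsub : F.filter (M < ·) ⊆ Finset.Ioc M (F.sup id) := by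
    intro x hx
    simp only [Finset.mem_filter] at hx
    simp only [Finset.mem_Ioc]
    exact ⟨hx.2, Finset.le_sup (f := id) hx.1⟩
  refine le_trans (Finset.sum_le_sum_of_subset_of_nonneg hsub
    (fun x _ _ => Real.rpow_nonneg (Nat.cast_nonneg x) _)) ?_
  exact sum_Ioc_rpow_le hα M _

private lemma tsum_pi_prod_fin : ∀ {k : ℕ} (h : Fin k → ℕ → ℝ≥0∞),
    ∑' g : Fin k → ℕ, ∏ i, h i (g i) = ∏ i, ∑' x, h i x := by
  intro k
  induction k with
  | zero =>
    intro h
    rw [tsum_eq_single (fun i => i.elim0) (fun g hg => absurd (funext fun i => i.elim0) hg)]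
    simp
  | succ k ih =>
    intro h
    rw [← (Fin.consEquiv (fun _ : Fin (k+1) => ℕ)).tsum_eq, ENNReal.tsum_prod']
    have e : ∀ (x : ℕ) (g : Fin k → ℕ),
        ∏ i, h i ((Fin.consEquiv (fun _ : Fin (k+1) => ℕ)) (x, g) i)
          = h 0 x * ∏ i : Fin k, h i.succ (g i) := by
      intro x g
      rw [Fin.prod_univ_succ]
      simp [Fin.consEquiv]
    simp_rw [e, ENNReal.tsum_mul_left]
    rw [ENNReal.tsum_mul_right, ih (fun i => h i.succ), Fin.prod_univ_succ]

private noncomputable def hW (q n : ℕ) (s : ℝ) {m : ℕ} (j i : Fin m) (k : ℕ) : ℝ≥0∞ :=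
  if i = j then (if k = 0 then 1 else 0)
  else ENNReal.ofReal (if 1 ≤ k ∧ q * k ≤ n then (k:ℝ) ^ (-s) else 0)

private noncomputable def hV (x : ℕ) (s : ℝ) {m : ℕ} (j i₀ i : Fin m) (k : ℕ) : ℝ≥0∞ :=
  if i = j then (if k = 0 then 1 else 0)
  else if i = i₀ then (if k = x then 1 else 0)
  else ENNReal.ofReal (if 1 ≤ k ∧ k ≤ x then (k:ℝ) ^ (-s) else 0)

private noncomputable def Wmaj (q n : ℕ) (s : ℝ) {m : ℕ}
    (p : Fin m × Fin m × ℕ × (Fin m → ℕ)) : ℝ≥0∞ :=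
  if p.2.1 = p.1 then
    (if p.2.2.1 = 0 then 1 else 0) *
      (ENNReal.ofReal (((n:ℝ)/(q:ℝ)) ^ (-s)) * ∏ i, hW q n s p.1 i (p.2.2.2 i))
  else
    (if 1 ≤ p.2.2.1 ∧ n < q * p.2.2.1 then ENNReal.ofReal ((p.2.2.1:ℝ) ^ (-(2*s))) else 0) *
      ∏ i, hV p.2.2.1 s p.1 p.2.1 i (p.2.2.2 i)

private lemma sum_Icc_ofReal_le {s : ℝ} (hs0 : 0 < s) (hs1 : s < 1) (K : ℕ) :
    ∑ k ∈ Finset.Icc 1 K, ENNReal.ofReal ((k:ℝ)^(-s))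
      ≤ ENNReal.ofReal ((1-s)⁻¹ * (K:ℝ)^(1-s)) := by
  rw [← ENNReal.ofReal_sum_of_nonneg (fun k _ => Real.rpow_nonneg (Nat.cast_nonneg _) _)]
  exact ENNReal.ofReal_le_ofReal (sum_rpow_le hs0 hs1 K)

private lemma realA {q m : ℕ} (hq : 2 ≤ q) (hm : 2 ≤ m) {s α : ℝ}
    (hs0 : 0 < s) (hs1 : s < 1) (hα : 0 < α)
    (hid : -s + (1-s)*((m:ℝ)-1) = -α) (n : ℕ) :
    ((n:ℝ)/(q:ℝ)) ^ (-s) * ((1-s)⁻¹ * ((n / q : ℕ):ℝ)^(1-s))^(m-1)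
      ≤ (1-s)⁻¹ ^ (m-1) * (q:ℝ)^α * (if n = 0 then 1 else (n:ℝ)^(-α)) := by
  have hc1 : (0:ℝ) < (1-s)⁻¹ := inv_pos.mpr (by linarith)
  have hq0 : (0:ℝ) < q := by exact_mod_cast (by omega : 0 < q)
  rcases Nat.eq_zero_or_pos n with rfl | hn
  · rw [if_pos rfl, Nat.cast_zero, zero_div, Real.zero_rpow (by linarith : -s ≠ 0), zero_mul,
      mul_one]
    positivity
  · rw [if_neg (by omega)]
    have hn0 : (0:ℝ) < n := by exact_mod_cast hn
    have hnq : (0:ℝ) < (n:ℝ)/q := by positivity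
    have hMle : ((n / q : ℕ):ℝ) ≤ (n:ℝ)/q := Nat.cast_div_le
    have h1 : ((n / q : ℕ):ℝ)^(1-s) ≤ ((n:ℝ)/q)^(1-s) :=
      Real.rpow_le_rpow (Nat.cast_nonneg _) hMle (by linarith)
    have h2 : ((1-s)⁻¹ * ((n / q : ℕ):ℝ)^(1-s))^(m-1) ≤ ((1-s)⁻¹ * ((n:ℝ)/q)^(1-s))^(m-1) := by
      refine pow_le_pow_left₀ (by positivity) ?_ _
      exact mul_le_mul_of_nonneg_left h1 hc1.le
    calc ((n:ℝ)/(q:ℝ)) ^ (-s) * ((1-s)⁻¹ * ((n / q : ℕ):ℝ)^(1-s))^(m-1)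
        ≤ ((n:ℝ)/(q:ℝ)) ^ (-s) * ((1-s)⁻¹ * ((n:ℝ)/q)^(1-s))^(m-1) :=
          mul_le_mul_of_nonneg_left h2 (Real.rpow_nonneg hnq.le _)
      _ = (1-s)⁻¹^(m-1) * (((n:ℝ)/q)^(-s) * (((n:ℝ)/q)^(1-s))^(m-1)) := by
          rw [mul_pow]; ring
      _ = (1-s)⁻¹^(m-1) * ((n:ℝ)/q)^(-α) := by
          rw [← Real.rpow_natCast (((n:ℝ)/q)^(1-s)) (m-1), ← Real.rpow_mul hnq.le,
            ← Real.rpow_add hnq]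
          congr 2
          rw [Nat.cast_sub (by omega : 1 ≤ m), Nat.cast_one]
          linarith [hid]
      _ = (1-s)⁻¹^(m-1) * (q:ℝ)^α * (n:ℝ)^(-α) := by
          rw [Real.div_rpow hn0.le hq0.le, Real.rpow_neg hq0.le, div_eq_mul_inv, inv_inv]
          ring

private lemma realB1 {m : ℕ} (hm : 2 ≤ m) {s α : ℝ} (hs0 : 0 < s) (hs1 : s < 1)
    (hid2 : -(2*s) + (1-s)*((m:ℝ)-2) = -(1+α)) {x : ℕ} (hx : 1 ≤ x) :
    (x:ℝ)^(-(2*s)) * ((1-s)⁻¹ * (x:ℝ)^(1-s))^(m-2)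
      = (1-s)⁻¹^(m-2) * (x:ℝ)^(-(1+α)) := by
  have hx0 : (0:ℝ) < x := by exact_mod_cast hx
  rw [mul_pow]
  rw [← Real.rpow_natCast ((x:ℝ)^(1-s)) (m-2), ← Real.rpow_mul hx0.le]
  rw [show (x:ℝ)^(-(2*s)) * ((1-s)⁻¹^(m-2) * (x:ℝ)^((1-s)*((m-2:ℕ):ℝ)))
      = (1-s)⁻¹^(m-2) * ((x:ℝ)^(-(2*s)) * (x:ℝ)^((1-s)*((m-2:ℕ):ℝ))) by ring]
  rw [← Real.rpow_add hx0]
  congr 2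
  rw [Nat.cast_sub (by omega : 2 ≤ m)]
  push_cast
  linarith [hid2]

private lemma realB2 {q : ℕ} (hq : 2 ≤ q) {α : ℝ} (hα : 0 < α) (n : ℕ) :
    (((n / q : ℕ):ℝ) + 1)^(-α) ≤ (q:ℝ)^α * (if n = 0 then 1 else (n:ℝ)^(-α)) := by
  have hq0 : (0:ℝ) < q := by exact_mod_cast (by omega : 0 < q)
  have hq1 : (1:ℝ) ≤ q := by exact_mod_cast (by omega : 1 ≤ q)
  rcases Nat.eq_zero_or_pos n with rfl | hn
  · rw [if_pos rfl, mul_one]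
    rw [show ((0 / q : ℕ):ℝ) + 1 = 1 by norm_num, Real.one_rpow]
    have h1 := Real.rpow_le_rpow (by norm_num : (0:ℝ) ≤ 1) hq1 hα.le
    rwa [Real.one_rpow] at h1
  · rw [if_neg (by omega)]
    have hn0 : (0:ℝ) < n := by exact_mod_cast hn
    have hlt : (n:ℝ)/q ≤ ((n / q : ℕ):ℝ) + 1 := by
      rw [div_le_iff₀ hq0]
      have h1 := Nat.div_add_mod n q
      have h2 : n % q < q := Nat.mod_lt _ (by omega)
      have h3 : n ≤ (n/q + 1) * q := by
        have h4 : (n/q + 1) * q = q * (n/q) + q := by ring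
        omega
      calc (n:ℝ) ≤ (((n/q + 1) * q : ℕ):ℝ) := by exact_mod_cast h3
        _ = (((n/q:ℕ):ℝ) + 1) * q := by push_cast; ring
    have h0 : (0:ℝ) < (n:ℝ)/q := by positivity
    calc (((n / q : ℕ):ℝ) + 1)^(-α) ≤ ((n:ℝ)/q)^(-α) :=
        Real.rpow_le_rpow_of_nonpos h0 hlt (by linarith)
      _ = (q:ℝ)^α * (n:ℝ)^(-α) := by
        rw [Real.div_rpow hn0.le hq0.le, Real.rpow_neg hq0.le, div_eq_mul_inv, inv_inv]
        ring

private lemma tsum_hW_self (q n : ℕ) (s : ℝ) {m : ℕ} (j : Fin m) :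
    ∑' k, hW q n s j j k = 1 := by
  simp only [hW, if_pos rfl]
  exact tsum_ite_eq 0 1

private lemma tsum_hW_ne {q : ℕ} (hq0 : 0 < q) (n : ℕ) (s : ℝ) {m : ℕ} {j i : Fin m}
    (hi : i ≠ j) :
    ∑' k, hW q n s j i k = ∑ k ∈ Finset.Icc 1 (n/q), ENNReal.ofReal ((k:ℝ)^(-s)) := by
  simp only [hW, if_neg hi]
  rw [tsum_eq_sum (s := Finset.Icc 1 (n / q)) ?_]
  · refine Finset.sum_congr rfl fun k hk => ?_
    rw [Finset.mem_Icc] at hk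
    rw [if_pos ⟨hk.1, by rw [mul_comm]; exact (Nat.le_div_iff_mul_le hq0).mp hk.2⟩]
  · intro k hk
    rw [Finset.mem_Icc] at hk
    rw [if_neg, ENNReal.ofReal_zero]
    rintro ⟨h1, h2⟩
    have h3 : k ≤ n / q := (Nat.le_div_iff_mul_le hq0).mpr (by rwa [mul_comm] at h2)
    exact hk ⟨h1, h3⟩

private lemma branchA_le {q m : ℕ} (hq : 2 ≤ q) (hm : 2 ≤ m) {s α : ℝ}
    (hs0 : 0 < s) (hs1 : s < 1) (hα : 0 < α)
    (hid : -s + (1-s)*((m:ℝ)-1) = -α) (n : ℕ) (j : Fin m) :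
    (∑' (x : ℕ), ∑' (g : Fin m → ℕ), Wmaj q n s (j, j, x, g))
      ≤ ENNReal.ofReal ((1-s)⁻¹ ^ (m-1) * (q:ℝ)^α *
          (if n = 0 then 1 else (n:ℝ)^(-α))) := by
  have hq0 : 0 < q := by omega
  have hWmaj : ∀ (x : ℕ) (g : Fin m → ℕ), Wmaj q n s (j, j, x, g)
      = (if x = 0 then 1 else 0) *
        (ENNReal.ofReal (((n:ℝ)/(q:ℝ)) ^ (-s)) * ∏ i, hW q n s j i (g i)) := by
    intro x g
    simp only [Wmaj, if_pos rfl]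
    simp
  simp only [hWmaj]
  simp_rw [ENNReal.tsum_mul_left, ENNReal.tsum_mul_right]
  rw [show (∑' i : ℕ, if i = 0 then (1:ℝ≥0∞) else 0) = 1 from tsum_ite_eq 0 1, tsum_pi_prod_fin, one_mul]
  set S := ∑ k ∈ Finset.Icc 1 (n/q), ENNReal.ofReal ((k:ℝ)^(-s)) with hS
  have hprod : (∏ i, ∑' k, hW q n s j i k) = S ^ (m-1) := by
    have hc : ∀ i : Fin m, (∑' k, hW q n s j i k) = if i = j then 1 else S := by
      intro i
      by_cases hi : i = j
      · rw [if_pos hi, hi, tsum_hW_self]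
      · rw [if_neg hi, tsum_hW_ne hq0 n s hi]
    rw [Finset.prod_congr rfl fun i _ => hc i, Finset.prod_ite, Finset.prod_const,
      Finset.prod_const, one_pow, one_mul]
    congr 1
    have he : Finset.filter (fun i => ¬ i = j) Finset.univ
        = (Finset.univ : Finset (Fin m)).erase j := by
      ext i; simp [Finset.mem_erase, and_comm]
    rw [he, Finset.card_erase_of_mem (Finset.mem_univ _), Finset.card_univ, Fintype.card_fin]
  rw [hprod]
  calc ENNReal.ofReal (((n:ℝ)/(q:ℝ)) ^ (-s)) * S ^ (m-1)
      ≤ ENNReal.ofReal (((n:ℝ)/(q:ℝ)) ^ (-s)) *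
          ENNReal.ofReal ((1-s)⁻¹ * ((n / q : ℕ):ℝ)^(1-s)) ^ (m-1) := by
        gcongr
        exact sum_Icc_ofReal_le hs0 hs1 _
    _ = ENNReal.ofReal (((n:ℝ)/(q:ℝ)) ^ (-s) * ((1-s)⁻¹ * ((n / q : ℕ):ℝ)^(1-s))^(m-1)) := by
        rw [← ENNReal.ofReal_pow (mul_nonneg (inv_nonneg.mpr (by linarith))
          (Real.rpow_nonneg (Nat.cast_nonneg _) _)), ← ENNReal.ofReal_mul
          (Real.rpow_nonneg (by positivity) _)]
    _ ≤ ENNReal.ofReal ((1-s)⁻¹ ^ (m-1) * (q:ℝ)^α * (if n = 0 then 1 else (n:ℝ)^(-α))) :=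
        ENNReal.ofReal_le_ofReal (realA hq hm hs0 hs1 hα hid n)

private lemma branchB_le {q m : ℕ} (hq : 2 ≤ q) (hm : 2 ≤ m) {s α : ℝ}
    (hs0 : 0 < s) (hs1 : s < 1) (hα : 0 < α)
    (hid2 : -(2*s) + (1-s)*((m:ℝ)-2) = -(1+α)) (n : ℕ) (j i₀ : Fin m) (hij : i₀ ≠ j) :
    (∑' (x : ℕ), ∑' (g : Fin m → ℕ), Wmaj q n s (j, i₀, x, g))
      ≤ ENNReal.ofReal ((1-s)⁻¹ ^ (m-2) * ((1 + α⁻¹) * ((q:ℝ)^α *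
          (if n = 0 then 1 else (n:ℝ)^(-α))))) := by
  have hq0 : 0 < q := by omega
  have hWm : ∀ (x : ℕ) (g : Fin m → ℕ), Wmaj q n s (j, i₀, x, g) =
      (if 1 ≤ x ∧ n < q * x then ENNReal.ofReal ((x:ℝ) ^ (-(2*s))) else 0) *
        ∏ i, hV x s j i₀ i (g i) := by
    intro x g
    simp only [Wmaj, if_neg hij]
  simp only [hWm]
  simp_rw [ENNReal.tsum_mul_left, tsum_pi_prod_fin]
  have hcoords : ∀ x : ℕ, (∏ i, ∑' k, hV x s j i₀ i k)
      = (∑ k ∈ Finset.Icc 1 x, ENNReal.ofReal ((k:ℝ)^(-s))) ^ (m-2) := by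
    intro x
    have hc : ∀ i : Fin m, (∑' k, hV x s j i₀ i k)
        = if i = j ∨ i = i₀ then 1 else
            (∑ k ∈ Finset.Icc 1 x, ENNReal.ofReal ((k:ℝ)^(-s))) := by
      intro i
      by_cases h1 : i = j
      · rw [if_pos (Or.inl h1)]; simp only [hV, if_pos h1]; exact tsum_ite_eq 0 1
      · by_cases h2 : i = i₀
        · rw [if_pos (Or.inr h2)]; simp only [hV, if_neg h1, if_pos h2]
          exact tsum_ite_eq x 1
        · rw [if_neg (by tauto)]; simp only [hV, if_neg h1, if_neg h2]
          rw [tsum_eq_sum (s := Finset.Icc 1 x) ?_]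
          · refine Finset.sum_congr rfl fun k hk => ?_
            rw [Finset.mem_Icc] at hk
            rw [if_pos hk]
          · intro k hk
            rw [Finset.mem_Icc] at hk
            rw [if_neg hk, ENNReal.ofReal_zero]
    rw [Finset.prod_congr rfl fun i _ => hc i, Finset.prod_ite, Finset.prod_const,
      Finset.prod_const, one_pow, one_mul]
    congr 1
    have he : Finset.filter (fun i => ¬(i = j ∨ i = i₀)) Finset.univ
        = (Finset.univ : Finset (Fin m)) \ {j, i₀} := by
      ext i
      simp [not_or]
    have hcard : ({j, i₀} : Finset (Fin m)).card = 2 := by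
      rw [Finset.card_insert_of_notMem (Finset.notMem_singleton.mpr fun h => hij h.symm),
        Finset.card_singleton]
    rw [he, Finset.card_sdiff_of_subset (Finset.subset_univ _), Finset.card_univ, Fintype.card_fin, hcard]
  simp_rw [hcoords]
  have hterm : ∀ x : ℕ,
      (if 1 ≤ x ∧ n < q * x then ENNReal.ofReal ((x:ℝ)^(-(2*s))) else 0) *
        (∑ k ∈ Finset.Icc 1 x, ENNReal.ofReal ((k:ℝ)^(-s)))^(m-2)
      ≤ ENNReal.ofReal ((1-s)⁻¹^(m-2)) *
          (if (n/q) < x then ENNReal.ofReal ((x:ℝ)^(-(1+α))) else 0) := by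
    intro x
    by_cases hc : 1 ≤ x ∧ n < q * x
    · rw [if_pos hc, if_pos ((Nat.div_lt_iff_lt_mul hq0).mpr (by rw [mul_comm]; exact hc.2))]
      calc ENNReal.ofReal ((x:ℝ)^(-(2*s))) *
            (∑ k ∈ Finset.Icc 1 x, ENNReal.ofReal ((k:ℝ)^(-s)))^(m-2)
          ≤ ENNReal.ofReal ((x:ℝ)^(-(2*s))) *
            ENNReal.ofReal ((1-s)⁻¹ * (x:ℝ)^(1-s)) ^ (m-2) := by
            gcongr
            exact sum_Icc_ofReal_le hs0 hs1 _
        _ = ENNReal.ofReal ((x:ℝ)^(-(2*s)) * ((1-s)⁻¹ * (x:ℝ)^(1-s))^(m-2)) := by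
            rw [← ENNReal.ofReal_pow (mul_nonneg (inv_nonneg.mpr (by linarith))
              (Real.rpow_nonneg (Nat.cast_nonneg _) _)), ← ENNReal.ofReal_mul
              (Real.rpow_nonneg (Nat.cast_nonneg _) _)]
        _ = ENNReal.ofReal ((1-s)⁻¹^(m-2) * (x:ℝ)^(-(1+α))) := by
            rw [realB1 hm hs0 hs1 hid2 hc.1]
        _ = ENNReal.ofReal ((1-s)⁻¹^(m-2)) * ENNReal.ofReal ((x:ℝ)^(-(1+α))) :=
            ENNReal.ofReal_mul (pow_nonneg (inv_nonneg.mpr (by linarith)) _)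
    · rw [if_neg hc, zero_mul]
      exact zero_le
  refine le_trans (ENNReal.tsum_le_tsum hterm) ?_
  rw [ENNReal.tsum_mul_left]
  have htail : (∑' x : ℕ, if (n/q) < x then ENNReal.ofReal ((x:ℝ)^(-(1+α))) else 0)
      ≤ ENNReal.ofReal ((1 + α⁻¹) * (((n/q : ℕ):ℝ)+1)^(-α)) := by
    rw [ENNReal.tsum_eq_iSup_sum]
    refine iSup_le fun F => ?_
    have he : ∑ x ∈ F, (if (n/q) < x then ENNReal.ofReal ((x:ℝ)^(-(1+α))) else 0)
        = ENNReal.ofReal (∑ x ∈ F, if (n/q) < x then (x:ℝ)^(-(1+α)) else 0) := by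
      rw [ENNReal.ofReal_sum_of_nonneg (fun x _ => by
        split
        · positivity
        · exact le_refl 0
        )]
      refine Finset.sum_congr rfl fun x _ => ?_
      split <;> simp
    rw [he]
    exact ENNReal.ofReal_le_ofReal (tail_rpow_le hα (n/q) F)
  calc ENNReal.ofReal ((1-s)⁻¹^(m-2)) *
        (∑' x : ℕ, if (n/q) < x then ENNReal.ofReal ((x:ℝ)^(-(1+α))) else 0)
      ≤ ENNReal.ofReal ((1-s)⁻¹^(m-2)) *
        ENNReal.ofReal ((1 + α⁻¹) * (((n/q : ℕ):ℝ)+1)^(-α)) := by gcongr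
    _ = ENNReal.ofReal ((1-s)⁻¹^(m-2) * ((1 + α⁻¹) * (((n/q : ℕ):ℝ)+1)^(-α))) :=
        (ENNReal.ofReal_mul (pow_nonneg (inv_nonneg.mpr (by linarith)) _)).symm
    _ ≤ ENNReal.ofReal ((1-s)⁻¹ ^ (m-2) * ((1 + α⁻¹) * ((q:ℝ)^α *
          (if n = 0 then 1 else (n:ℝ)^(-α))))) := by
        refine ENNReal.ofReal_le_ofReal ?_
        have h1 := realB2 hq hα n
        have h2 : (0:ℝ) ≤ (1-s)⁻¹^(m-2) := pow_nonneg (inv_nonneg.mpr (by linarith)) _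
        have h3 : (0:ℝ) ≤ 1 + α⁻¹ := by positivity
        refine mul_le_mul_of_nonneg_left ?_ h2
        exact mul_le_mul_of_nonneg_left h1 h3

private lemma key_max {q m : ℕ} (hq : 2 ≤ q) {ε : Fin m → ℤ} {f : Fin m → ℕ} {n : ℕ}
    (hsol : ∑ i, ε i • digitsMap q (f i) = digitsMap q n)
    {j : Fin m} (hj : ∀ i, f i ≤ f j) (hfj : 0 < f j) : n < q * f j := by
  have h1 : 1 < q := by omega
  have hbig : ∀ i, f i < q ^ (Nat.log q (f j) + 1) :=
    fun i => lt_of_le_of_lt (hj i) (Nat.lt_pow_succ_log_self h1 _)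
  have hdig : ∀ p, Nat.log q (f j) + 1 ≤ p → digitsMap q n p = 0 := by
    intro p hp
    rw [← hsol, Finset.sum_apply]
    refine Finset.sum_eq_zero fun i _ => ?_
    rw [Pi.smul_apply, digitsMap_eq_zero_of_lt hq (hbig i) hp, smul_zero]
  have h2 := lt_pow_of_digitsMap_eq_zero hq hdig
  calc n < q ^ (Nat.log q (f j) + 1) := h2
    _ = q ^ Nat.log q (f j) * q := pow_succ q _
    _ ≤ f j * q := Nat.mul_le_mul_right _ (Nat.pow_log_le_self q (by omega))
    _ = q * f j := Nat.mul_comm _ _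

private lemma sol_unique {q m : ℕ} (hq : 2 ≤ q) {ε : Fin m → ℤ} (hε : ∀ i, ε i = 1 ∨ ε i = -1)
    {n : ℕ} (j : Fin m) {f f' : Fin m → ℕ}
    (hf : ∑ i, ε i • digitsMap q (f i) = digitsMap q n)
    (hf' : ∑ i, ε i • digitsMap q (f' i) = digitsMap q n)
    (h : ∀ i, i ≠ j → f i = f' i) : f = f' := by
  have h1 : ε j • digitsMap q (f j) = ε j • digitsMap q (f' j) := by
    have h2 : ∑ i, ε i • digitsMap q (f i) = ∑ i, ε i • digitsMap q (f' i) := by rw [hf, hf']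
    rw [← Finset.add_sum_erase _ _ (Finset.mem_univ j),
      ← Finset.add_sum_erase _ (fun i => ε i • digitsMap q (f' i)) (Finset.mem_univ j)] at h2
    have h3 : ∑ i ∈ Finset.univ.erase j, ε i • digitsMap q (f i)
        = ∑ i ∈ Finset.univ.erase j, ε i • digitsMap q (f' i) :=
      Finset.sum_congr rfl fun i hi => by rw [h i (Finset.ne_of_mem_erase hi)]
    rw [h3] at h2
    exact add_right_cancel h2
  have h4 : digitsMap q (f j) = digitsMap q (f' j) := by
    rcases hε j with he | he
    · rwa [he, one_smul, one_smul] at h1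
    · rw [he, neg_smul, neg_smul, one_smul, one_smul] at h1
      exact neg_injective h1
  have h5 := digitsMap_injective hq h4
  funext i
  by_cases hi : i = j
  · rw [hi]; exact h5
  · exact h i hi


set_option maxHeartbeats 1000000 in
/-- Let `q ≥ 2`, `m ≥ 2`, `s = (m-1)/m + θ` with `0 < θ < 1/m`, and fix signs `ε i ∈ {±1}`.
Let `δ : ℕ → ⊕_{i ∈ ℕ} ℤ/qℤ` be the base-`q` digit bijection. Then there is a constant `C > 0`
(depending only on `q`, `m`, `s`) such that for every `n : ℕ` the sum of `∏ i, (n i) ^ (-s)`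
over all `m`-tuples of positive integers with `∑ i, ε i • δ (n i) = δ n` in the direct sum is
(summable and) at most `C` if `n = 0` and at most `C * n ^ (-mθ)` if `n ≥ 1`. -/
theorem signed_representation_sum_bound_zmodq (q : ℕ) (hq : 2 ≤ q)
    (m : ℕ) (hm : 2 ≤ m) (θ s : ℝ)
    (hθ₀ : 0 < θ) (hθ₁ : θ < 1 / m) (hs : s = (m - 1 : ℝ) / m + θ)
    (ε : Fin m → ℤ) (hε : ∀ i, ε i = 1 ∨ ε i = -1) :
    ∃ C : ℝ, 0 < C ∧ ∀ n : ℕ,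
      Summable (fun f : {f : Fin m → ℕ //
          (∀ i, 0 < f i) ∧ ∑ i, ε i • digitsMap q (f i) = digitsMap q n} =>
        ∏ i, ((f : Fin m → ℕ) i : ℝ) ^ (-s)) ∧
      ∑' f : {f : Fin m → ℕ //
          (∀ i, 0 < f i) ∧ ∑ i, ε i • digitsMap q (f i) = digitsMap q n},
          ∏ i, ((f : Fin m → ℕ) i : ℝ) ^ (-s) ≤
        if n = 0 then C else C * (n : ℝ) ^ (-(m * θ)) := by
  have hm0 : (0:ℝ) < m := by exact_mod_cast (by omega : 0 < m)
  have hm1 : (1:ℝ) ≤ m := by exact_mod_cast (by omega : 1 ≤ m)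
  have hq0 : 0 < q := by omega
  have hq0' : (0:ℝ) < q := by exact_mod_cast hq0
  have hms : (m:ℝ) * s = (m:ℝ) - 1 + (m:ℝ) * θ := by
    rw [hs]; field_simp
  have hα : (0:ℝ) < (m:ℝ) * θ := by positivity
  have hs0 : 0 < s := by
    rw [hs]
    have h1 : (0:ℝ) ≤ ((m:ℝ)-1)/m := div_nonneg (by linarith) hm0.le
    linarith
  have hs1 : s < 1 := by
    have h2 : ((m:ℝ)-1)/m + 1/m = 1 := by field_simp; ring
    rw [hs]; linarith
  have hid : -s + (1-s)*((m:ℝ)-1) = -((m:ℝ) * θ) := by nlinarith [hms]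
  have hid2 : -(2*s) + (1-s)*((m:ℝ)-2) = -(1+(m:ℝ) * θ) := by nlinarith [hms]
  set α := (m:ℝ) * θ with hαdef
  have hc1 : (0:ℝ) < (1-s)⁻¹ := inv_pos.mpr (by linarith)
  set B : ℝ := ((1-s)⁻¹^(m-1) * (q:ℝ)^α +
      (1-s)⁻¹^(m-2) * ((1+α⁻¹) * (q:ℝ)^α)) with hB
  have hB0 : 0 < B := by
    rw [hB]
    have h1 : (0:ℝ) < (q:ℝ)^α := Real.rpow_pos_of_pos hq0' _
    have h2 : (0:ℝ) < (1-s)⁻¹^(m-1) := pow_pos hc1 _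
    have h3 : (0:ℝ) < (1-s)⁻¹^(m-2) := pow_pos hc1 _
    have h4 : (0:ℝ) < 1 + α⁻¹ := by positivity
    nlinarith [mul_pos h2 h1, mul_pos h3 (mul_pos h4 h1)]
  refine ⟨(m:ℝ) * m * B, by positivity, fun n => ?_⟩
  -- the ENNReal estimate
  have key : (∑' f : {f : Fin m → ℕ //
        (∀ i, 0 < f i) ∧ ∑ i, ε i • digitsMap q (f i) = digitsMap q n},
        ENNReal.ofReal (∏ i, ((f.1 i : ℝ)) ^ (-s)))
      ≤ ENNReal.ofReal ((m:ℝ) * m * B * (if n = 0 then 1 else (n:ℝ)^(-α))) := by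
    haveI hne : Nonempty (Fin m) := ⟨⟨0, by omega⟩⟩
    obtain ⟨jf, hjf⟩ : ∃ jf : {f : Fin m → ℕ //
        (∀ i, 0 < f i) ∧ ∑ i, ε i • digitsMap q (f i) = digitsMap q n} → Fin m,
        ∀ f : {f : Fin m → ℕ //
          (∀ i, 0 < f i) ∧ ∑ i, ε i • digitsMap q (f i) = digitsMap q n},
          ∀ i, f.1 i ≤ f.1 (jf f) :=
      ⟨fun f => (Finite.exists_max f.1).choose, fun f => (Finite.exists_max f.1).choose_spec⟩
    have hselE : ∀ f : {f : Fin m → ℕ //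
        (∀ i, 0 < f i) ∧ ∑ i, ε i • digitsMap q (f i) = digitsMap q n},
        ∃ p : Fin m × ℕ,
        (p.1 = jf f ∧ p.2 = 0 ∧ ∀ i, i ≠ jf f → q * f.1 i ≤ n) ∨
        (p.1 ≠ jf f ∧ p.2 = f.1 p.1 ∧ n < q * p.2 ∧ ∀ i, i ≠ jf f → f.1 i ≤ p.2) := by
      intro f
      by_cases hcase : ∀ i, i ≠ jf f → q * f.1 i ≤ n
      · exact ⟨(jf f, 0), Or.inl ⟨rfl, rfl, hcase⟩⟩
      · push_neg at hcase
        obtain ⟨i', hi', hgt⟩ := hcase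
        haveI : Nonempty {i : Fin m // i ≠ jf f} := ⟨⟨i', hi'⟩⟩
        obtain ⟨i₀, hi₀⟩ := Finite.exists_max (fun i : {i : Fin m // i ≠ jf f} => f.1 i.1)
        refine ⟨(i₀.1, f.1 i₀.1), Or.inr ⟨i₀.2, rfl, ?_, fun i hi => hi₀ ⟨i, hi⟩⟩⟩
        calc n < q * f.1 i' := hgt
          _ ≤ q * f.1 i₀.1 := Nat.mul_le_mul_left _ (hi₀ ⟨i', hi'⟩)
    choose sel hsel using hselE
    obtain ⟨ι, hιdef⟩ : ∃ ι : {f : Fin m → ℕ //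
        (∀ i, 0 < f i) ∧ ∑ i, ε i • digitsMap q (f i) = digitsMap q n} →
          Fin m × Fin m × ℕ × (Fin m → ℕ),
        ∀ f, ι f = (jf f, (sel f).1, (sel f).2, Function.update f.1 (jf f) 0) :=
      ⟨_, fun f => rfl⟩
    have hinj : Function.Injective ι := by
      intro f f' h
      rw [hιdef, hιdef] at h
      simp only [Prod.mk.injEq] at h
      obtain ⟨h1, _, _, h4⟩ := h
      apply Subtype.ext
      refine sol_unique hq hε (jf f) f.2.2 f'.2.2 fun i hi => ?_
      have h5 := congrFun h4 i
      rwa [Function.update_of_ne hi, Function.update_of_ne (h1 ▸ hi)] at h5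
    have hpt : ∀ f : {f : Fin m → ℕ //
        (∀ i, 0 < f i) ∧ ∑ i, ε i • digitsMap q (f i) = digitsMap q n},
        ENNReal.ofReal (∏ i, ((f.1 i : ℝ)) ^ (-s)) ≤ Wmaj q n s (ι f) := by
      intro f
      have hpos := f.2.1
      have hmax := hjf f
      have hqn : n < q * f.1 (jf f) := key_max hq f.2.2 hmax (hpos _)
      have hup : ∀ i, i ≠ jf f → Function.update f.1 (jf f) 0 i = f.1 i :=
        fun i hi => Function.update_of_ne hi 0 f.1
      rw [hιdef f]
      rcases hsel f with ⟨hj1, hx0, hcase⟩ | ⟨hne', hx, hqx, hle⟩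
      · -- case A
        have hW1 : Wmaj q n s (jf f, (sel f).1, (sel f).2, Function.update f.1 (jf f) 0)
            = ENNReal.ofReal (((n:ℝ)/(q:ℝ)) ^ (-s)) *
              ∏ i, hW q n s (jf f) i (Function.update f.1 (jf f) 0 i) := by
          simp only [Wmaj, hj1, if_pos hx0, eq_self_iff_true, if_true, one_mul]
        rw [hW1]
        have hprod : (∏ i, hW q n s (jf f) i (Function.update f.1 (jf f) 0 i))
            = ∏ i ∈ Finset.univ.erase (jf f), ENNReal.ofReal ((f.1 i:ℝ) ^ (-s)) := by
          rw [← Finset.mul_prod_erase Finset.univ _ (Finset.mem_univ (jf f))]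
          have h0 : hW q n s (jf f) (jf f) (Function.update f.1 (jf f) 0 (jf f)) = 1 := by
            simp [hW, Function.update_self]
          rw [h0, one_mul]
          refine Finset.prod_congr rfl fun i hi => ?_
          have hi' := Finset.ne_of_mem_erase hi
          rw [hup i hi']
          simp only [hW, if_neg hi']
          rw [if_pos ⟨hpos i, hcase i hi'⟩]
        rw [hprod]
        have hq_le_n : q ≤ n := by
          obtain ⟨i1, hi1⟩ := Fintype.exists_ne_of_one_lt_card
            (by rw [Fintype.card_fin]; omega) (jf f)
          have h6 := hcase i1 hi1
          have h7 : q ≤ q * f.1 i1 := Nat.le_mul_of_pos_right q (hpos i1)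
          omega
        have hn0 : (0:ℝ) < n := by exact_mod_cast (by omega : 0 < n)
        have hnq0 : (0:ℝ) < (n:ℝ)/q := by positivity
        have hfj : ((n:ℝ)/q) ≤ (f.1 (jf f) : ℝ) := by
          rw [div_le_iff₀ hq0']
          have h8 : (n:ℝ) < (q:ℝ) * (f.1 (jf f) : ℝ) := by exact_mod_cast hqn
          linarith
        rw [← ENNReal.ofReal_prod_of_nonneg
          (fun i _ => Real.rpow_nonneg (Nat.cast_nonneg _) _),
          ← ENNReal.ofReal_mul (Real.rpow_nonneg (by positivity) _)]
        refine ENNReal.ofReal_le_ofReal ?_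
        rw [← Finset.mul_prod_erase Finset.univ (fun i => ((f.1 i:ℝ))^(-s))
          (Finset.mem_univ (jf f))]
        refine mul_le_mul_of_nonneg_right ?_
          (Finset.prod_nonneg fun i _ => Real.rpow_nonneg (Nat.cast_nonneg _) _)
        exact Real.rpow_le_rpow_of_nonpos hnq0 hfj (by linarith)
      · -- case B
        have hx1 : 1 ≤ (sel f).2 := by rw [hx]; exact hpos _
        have hW2 : Wmaj q n s (jf f, (sel f).1, (sel f).2, Function.update f.1 (jf f) 0)
            = ENNReal.ofReal (((sel f).2:ℝ) ^ (-(2*s))) *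
              ∏ i, hV (sel f).2 s (jf f) (sel f).1 i (Function.update f.1 (jf f) 0 i) := by
          simp only [Wmaj, if_neg hne']
          rw [if_pos ⟨hx1, hqx⟩]
        rw [hW2]
        have hprod : (∏ i, hV (sel f).2 s (jf f) (sel f).1 i (Function.update f.1 (jf f) 0 i))
            = ∏ i ∈ (Finset.univ.erase (jf f)).erase (sel f).1,
                ENNReal.ofReal ((f.1 i:ℝ) ^ (-s)) := by
          rw [← Finset.mul_prod_erase Finset.univ _ (Finset.mem_univ (jf f))]
          have h0 : hV (sel f).2 s (jf f) (sel f).1 (jf f)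
              (Function.update f.1 (jf f) 0 (jf f)) = 1 := by
            simp [hV, Function.update_self]
          rw [h0, one_mul]
          rw [← Finset.mul_prod_erase _ _
            (Finset.mem_erase.mpr ⟨hne', Finset.mem_univ (sel f).1⟩)]
          have h1 : hV (sel f).2 s (jf f) (sel f).1 (sel f).1
              (Function.update f.1 (jf f) 0 (sel f).1) = 1 := by
            rw [hup _ hne']
            simp only [hV, if_neg hne', eq_self_iff_true, if_true]
            rw [if_pos hx.symm]
          rw [h1, one_mul]
          refine Finset.prod_congr rfl fun i hi => ?_
          have hii₀ : i ≠ (sel f).1 := (Finset.mem_erase.mp hi).1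
          have hij' : i ≠ jf f := Finset.ne_of_mem_erase (Finset.mem_of_mem_erase hi)
          rw [hup i hij']
          simp only [hV, if_neg hij', if_neg hii₀]
          rw [if_pos ⟨hpos i, hle i hij'⟩]
        rw [hprod]
        rw [← ENNReal.ofReal_prod_of_nonneg
          (fun i _ => Real.rpow_nonneg (Nat.cast_nonneg _) _),
          ← ENNReal.ofReal_mul (Real.rpow_nonneg (Nat.cast_nonneg _) _)]
        refine ENNReal.ofReal_le_ofReal ?_
        rw [← Finset.mul_prod_erase Finset.univ (fun i => ((f.1 i:ℝ))^(-s))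
          (Finset.mem_univ (jf f)),
          ← Finset.mul_prod_erase _ _
            (Finset.mem_erase.mpr ⟨hne', Finset.mem_univ (sel f).1⟩), ← mul_assoc]
        refine mul_le_mul_of_nonneg_right ?_
          (Finset.prod_nonneg fun i _ => Real.rpow_nonneg (Nat.cast_nonneg _) _)
        have hx0R : (0:ℝ) < ((sel f).2:ℝ) := by exact_mod_cast hx1
        have hfj2 : ((sel f).2:ℝ) ≤ (f.1 (jf f):ℝ) := by
          have := hmax (sel f).1
          rw [hx]
          exact_mod_cast this
        have e1 : ((f.1 (jf f):ℝ))^(-s) ≤ (((sel f).2:ℝ))^(-s) :=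
          Real.rpow_le_rpow_of_nonpos hx0R hfj2 (by linarith)
        have e2 : ((f.1 (sel f).1:ℝ))^(-s) = (((sel f).2:ℝ))^(-s) := by rw [hx]
        rw [show -(2*s) = -s + -s by ring, Real.rpow_add hx0R]
        rw [e2]
        exact mul_le_mul_of_nonneg_right e1 (Real.rpow_nonneg hx0R.le _)
    -- assemble
    calc (∑' f : {f : Fin m → ℕ //
          (∀ i, 0 < f i) ∧ ∑ i, ε i • digitsMap q (f i) = digitsMap q n},
          ENNReal.ofReal (∏ i, ((f.1 i : ℝ)) ^ (-s)))
        ≤ ∑' f : {f : Fin m → ℕ //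
          (∀ i, 0 < f i) ∧ ∑ i, ε i • digitsMap q (f i) = digitsMap q n},
            Wmaj q n s (ι f) := ENNReal.tsum_le_tsum hpt
      _ ≤ ∑' p : Fin m × Fin m × ℕ × (Fin m → ℕ), Wmaj q n s p :=
          ENNReal.tsum_comp_le_tsum_of_injective hinj _
      _ ≤ ENNReal.ofReal ((m:ℝ) * m * B * (if n = 0 then 1 else (n:ℝ)^(-α))) := by
          rw [ENNReal.tsum_prod']
          have hinner : ∀ j : Fin m,
              (∑' (p2 : Fin m × ℕ × (Fin m → ℕ)), Wmaj q n s (j, p2))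
              ≤ (m : ℝ≥0∞) * ENNReal.ofReal (B * (if n = 0 then 1 else (n:ℝ)^(-α))) := by
            intro j
            rw [ENNReal.tsum_prod']
            have hinner2 : ∀ i₀ : Fin m,
                (∑' (p3 : ℕ × (Fin m → ℕ)), Wmaj q n s (j, i₀, p3))
                ≤ ENNReal.ofReal (B * (if n = 0 then 1 else (n:ℝ)^(-α))) := by
              intro i₀
              rw [ENNReal.tsum_prod']
              have hpos1 : (0:ℝ) ≤ (1-s)⁻¹^(m-1) * (q:ℝ)^α *
                  (if n = 0 then 1 else (n:ℝ)^(-α)) := by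
                have h1 : (0:ℝ) ≤ (if n = 0 then (1:ℝ) else (n:ℝ)^(-α)) := by
                  split
                  · norm_num
                  · positivity
                have h2 : (0:ℝ) ≤ (1-s)⁻¹^(m-1) := pow_nonneg hc1.le _
                positivity
              have hpos2 : (0:ℝ) ≤ (1-s)⁻¹^(m-2) * ((1+α⁻¹) * ((q:ℝ)^α *
                  (if n = 0 then 1 else (n:ℝ)^(-α)))) := by
                have h1 : (0:ℝ) ≤ (if n = 0 then (1:ℝ) else (n:ℝ)^(-α)) := by
                  split
                  · norm_num
                  · positivity
                have h2 : (0:ℝ) ≤ (1-s)⁻¹^(m-2) := pow_nonneg hc1.le _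
                positivity
              by_cases hij : i₀ = j
              · subst hij
                refine (branchA_le hq hm hs0 hs1 hα hid n i₀).trans
                  (ENNReal.ofReal_le_ofReal ?_)
                rw [hB]
                have h1 : (0:ℝ) ≤ (if n = 0 then (1:ℝ) else (n:ℝ)^(-α)) := by
                  split
                  · norm_num
                  · positivity
                nlinarith [hpos2]
              · refine (branchB_le hq hm hs0 hs1 hα hid2 n j i₀ hij).trans
                  (ENNReal.ofReal_le_ofReal ?_)
                rw [hB]
                have h1 : (0:ℝ) ≤ (if n = 0 then (1:ℝ) else (n:ℝ)^(-α)) := by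
                  split
                  · norm_num
                  · positivity
                nlinarith [hpos1]
            calc (∑' (i₀ : Fin m) (p3 : ℕ × (Fin m → ℕ)), Wmaj q n s (j, i₀, p3))
                ≤ ∑' (_ : Fin m), ENNReal.ofReal (B * (if n = 0 then 1 else (n:ℝ)^(-α))) :=
                  ENNReal.tsum_le_tsum hinner2
              _ = (m : ℝ≥0∞) * ENNReal.ofReal (B * (if n = 0 then 1 else (n:ℝ)^(-α))) := by
                  rw [tsum_fintype]
                  simp [Finset.sum_const, Finset.card_univ, nsmul_eq_mul]
          calc (∑' (j : Fin m) (p2 : Fin m × ℕ × (Fin m → ℕ)), Wmaj q n s (j, p2))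
              ≤ ∑' (_ : Fin m), (m : ℝ≥0∞) *
                  ENNReal.ofReal (B * (if n = 0 then 1 else (n:ℝ)^(-α))) :=
                ENNReal.tsum_le_tsum hinner
            _ = (m : ℝ≥0∞) * ((m : ℝ≥0∞) *
                  ENNReal.ofReal (B * (if n = 0 then 1 else (n:ℝ)^(-α)))) := by
                rw [tsum_fintype]
                simp [Finset.sum_const, Finset.card_univ, nsmul_eq_mul]
            _ = ENNReal.ofReal ((m:ℝ) * m * B * (if n = 0 then 1 else (n:ℝ)^(-α))) := by
                rw [show ((m:ℕ) : ℝ≥0∞) = ENNReal.ofReal (m:ℝ) by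
                    rw [ENNReal.ofReal_natCast]]
                rw [← ENNReal.ofReal_mul (by positivity), ← ENNReal.ofReal_mul (by positivity)]
                congr 1
                ring
  -- convert back to ℝ
  have hnonneg : ∀ f : {f : Fin m → ℕ //
      (∀ i, 0 < f i) ∧ ∑ i, ε i • digitsMap q (f i) = digitsMap q n},
      0 ≤ ∏ i, ((f.1 i : ℝ)) ^ (-s) :=
    fun f => Finset.prod_nonneg fun i _ => Real.rpow_nonneg (Nat.cast_nonneg _) _
  have hne : (∑' f : {f : Fin m → ℕ //
      (∀ i, 0 < f i) ∧ ∑ i, ε i • digitsMap q (f i) = digitsMap q n},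
      ENNReal.ofReal (∏ i, ((f.1 i : ℝ)) ^ (-s))) ≠ ⊤ :=
    (lt_of_le_of_lt key ENNReal.ofReal_lt_top).ne
  have hsummable : Summable (fun f : {f : Fin m → ℕ //
      (∀ i, 0 < f i) ∧ ∑ i, ε i • digitsMap q (f i) = digitsMap q n} =>
      ∏ i, ((f.1 i : ℝ)) ^ (-s)) := by
    have h1 := ENNReal.summable_toReal hne
    refine h1.congr fun f => ?_
    rw [ENNReal.toReal_ofReal (hnonneg f)]
  refine ⟨hsummable, ?_⟩
  have htsum : (∑' f : {f : Fin m → ℕ //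
      (∀ i, 0 < f i) ∧ ∑ i, ε i • digitsMap q (f i) = digitsMap q n},
      ∏ i, ((f.1 i : ℝ)) ^ (-s))
      = (∑' f : {f : Fin m → ℕ //
      (∀ i, 0 < f i) ∧ ∑ i, ε i • digitsMap q (f i) = digitsMap q n},
      ENNReal.ofReal (∏ i, ((f.1 i : ℝ)) ^ (-s))).toReal := by
    rw [ENNReal.tsum_toReal_eq (fun f => ENNReal.ofReal_ne_top)]
    exact tsum_congr fun f => (ENNReal.toReal_ofReal (hnonneg f)).symm
  rw [htsum]
  refine le_trans (ENNReal.toReal_mono ENNReal.ofReal_ne_top key) ?_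
  have h1 : (0:ℝ) ≤ (if n = 0 then (1:ℝ) else (n:ℝ)^(-α)) := by
    split
    · norm_num
    · positivity
  rw [ENNReal.toReal_ofReal (by positivity)]
  by_cases hn : n = 0
  · rw [if_pos hn, if_pos hn, mul_one]
  · rw [if_neg hn, if_neg hn, hαdef]
end
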